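/- arXiv:1906.10951 — 6 statements merged into one kernel-verified Lean document; each statement's English description precedes it below -/
import Mathlib

section
/- For the Rescaled Pólya urn with β > 1, the predictive mean ψ_N converges almost surely, as N → ∞, to the random vector ψ_∞ = (B₀ + α Σ_{n=1}^∞ β^{-n} ξ_n) / (|B₀| + α/(β−1)), and the rate of convergence is |ψ_N − ψ_∞| = O(β^{-N}) almost surely. Moreover ψ_∞ takes values in the simplex {x ∈ [0,1]^k : |x| = 1}, and if B₀ᵢ > 0 for all i = 1,…,k, then almost surely ψ_{∞,i} ∈ (0,1) for each i. -/
open MeasureTheory ProbabilityTheory Filter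

section RPAux
open Finset

noncomputable def rpG (k : ℕ) (α β : ℝ) (b₀ B₀ : Fin k → ℝ) (x : ℕ → Fin k → ℝ)
    (N : ℕ) (i : Fin k) : ℝ :=
  β⁻¹ ^ N * b₀ i + B₀ i + α * ∑ m ∈ Finset.range N, β⁻¹ ^ (m + 1) * x m i

noncomputable def rpGinf (k : ℕ) (α β : ℝ) (B₀ : Fin k → ℝ) (x : ℕ → Fin k → ℝ)
    (i : Fin k) : ℝ :=
  B₀ i + α * ∑' n : ℕ, β⁻¹ ^ (n + 1) * x n i

-- basic facts about x
lemma rp_x01 {k : ℕ} {x : ℕ → Fin k → ℝ} (hx : ∀ n, ∃ i, x n = Pi.single i 1)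
    (n : ℕ) (i : Fin k) : 0 ≤ x n i ∧ x n i ≤ 1 := by
  obtain ⟨i0, h⟩ := hx n
  rw [h, Pi.single_apply]
  split <;> norm_num

lemma rp_xsum {k : ℕ} {x : ℕ → Fin k → ℝ} (hx : ∀ n, ∃ i, x n = Pi.single i 1)
    (hk : 1 ≤ k) (n : ℕ) : ∑ i, x n i = 1 := by
  obtain ⟨i0, h⟩ := hx n
  rw [h, Finset.sum_pi_single' i0 1]
  simp

lemma rp_summable {k : ℕ} {β : ℝ} (hβ : 1 < β) {x : ℕ → Fin k → ℝ}
    (hx : ∀ n, ∃ i, x n = Pi.single i 1) (i : Fin k) :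
    Summable (fun n => β⁻¹ ^ (n + 1) * x n i) := by
  have hβ0 : (0:ℝ) < β := lt_trans one_pos hβ
  have h0 : (0:ℝ) ≤ β⁻¹ := inv_nonneg.mpr hβ0.le
  have h1 : β⁻¹ < 1 := inv_lt_one_of_one_lt₀ hβ
  apply Summable.of_nonneg_of_le
  · intro n
    exact mul_nonneg (pow_nonneg h0 _) (rp_x01 hx n i).1
  · intro n
    calc β⁻¹ ^ (n + 1) * x n i ≤ β⁻¹ ^ (n + 1) * 1 :=
          mul_le_mul_of_nonneg_left (rp_x01 hx n i).2 (pow_nonneg h0 _)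
      _ = β⁻¹ ^ n * β⁻¹ := by rw [mul_one, pow_succ]
  · exact (summable_geometric_of_lt_one h0 h1).mul_right β⁻¹

lemma rp_tsum_geo {β : ℝ} (hβ : 1 < β) : ∑' n : ℕ, β⁻¹ ^ (n + 1) = (β - 1)⁻¹ := by
  have hβ0 : (0:ℝ) < β := lt_trans one_pos hβ
  have h0 : (0:ℝ) ≤ β⁻¹ := inv_nonneg.mpr hβ0.le
  have h1 : β⁻¹ < 1 := inv_lt_one_of_one_lt₀ hβ
  have : ∀ n : ℕ, β⁻¹ ^ (n + 1) = β⁻¹ ^ n * β⁻¹ := fun n => pow_succ _ _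
  rw [tsum_congr fun n => this n, tsum_mul_right, tsum_geometric_of_lt_one h0 h1]
  have hne : (1 : ℝ) - β⁻¹ ≠ 0 := by
    have : β⁻¹ < 1 := h1
    linarith
  rw [← mul_inv]
  congr 1
  rw [sub_mul, one_mul, inv_mul_cancel₀ (ne_of_gt hβ0)]

lemma rp_tail {k : ℕ} {β : ℝ} (hβ : 1 < β) {x : ℕ → Fin k → ℝ}
    (hx : ∀ n, ∃ i, x n = Pi.single i 1) (α : ℝ) (hα : 0 < α) (i : Fin k) (N : ℕ) :
    0 ≤ (∑' n : ℕ, β⁻¹ ^ (n + 1) * x n i) - ∑ m ∈ Finset.range N, β⁻¹ ^ (m + 1) * x m i ∧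
    (∑' n : ℕ, β⁻¹ ^ (n + 1) * x n i) - ∑ m ∈ Finset.range N, β⁻¹ ^ (m + 1) * x m i
      ≤ β⁻¹ ^ N * (β - 1)⁻¹ := by
  have hβ0 : (0:ℝ) < β := lt_trans one_pos hβ
  have h0 : (0:ℝ) ≤ β⁻¹ := inv_nonneg.mpr hβ0.le
  have hs := rp_summable hβ hx i
  have key := Summable.sum_add_tsum_nat_add N hs
  have hdiff : (∑' n : ℕ, β⁻¹ ^ (n + 1) * x n i)
      - ∑ m ∈ Finset.range N, β⁻¹ ^ (m + 1) * x m i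
      = ∑' n : ℕ, β⁻¹ ^ (n + N + 1) * x (n + N) i := by
    rw [← key]; ring
  rw [hdiff]
  constructor
  · exact tsum_nonneg fun n => mul_nonneg (pow_nonneg h0 _) (rp_x01 hx _ i).1
  · have hb : ∀ n : ℕ, β⁻¹ ^ (n + N + 1) * x (n + N) i ≤ β⁻¹ ^ N * β⁻¹ ^ (n + 1) := by
      intro n
      have he : β⁻¹ ^ (n + N + 1) = β⁻¹ ^ N * β⁻¹ ^ (n + 1) := by ring
      rw [he, mul_assoc]
      refine mul_le_mul_of_nonneg_left ?_ (pow_nonneg h0 N)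
      calc β⁻¹ ^ (n+1) * x (n+N) i ≤ β⁻¹ ^ (n+1) * 1 :=
            mul_le_mul_of_nonneg_left (rp_x01 hx _ i).2 (pow_nonneg h0 _)
        _ = β⁻¹ ^ (n+1) := mul_one _
    have hs2 : Summable (fun n : ℕ => β⁻¹ ^ N * β⁻¹ ^ (n + 1)) := by
      have : Summable (fun n : ℕ => β⁻¹ ^ (n + 1)) := by
        simpa [pow_succ] using
          (summable_geometric_of_lt_one h0 (inv_lt_one_of_one_lt₀ hβ)).mul_right β⁻¹
      exact this.mul_left _
    have hs1 : Summable (fun n : ℕ => β⁻¹ ^ (n + N + 1) * x (n + N) i) :=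
      (summable_nat_add_iff N).mpr hs
    calc ∑' n : ℕ, β⁻¹ ^ (n + N + 1) * x (n + N) i
        ≤ ∑' n : ℕ, β⁻¹ ^ N * β⁻¹ ^ (n + 1) := Summable.tsum_le_tsum hb hs1 hs2
      _ = β⁻¹ ^ N * (β - 1)⁻¹ := by rw [tsum_mul_left, rp_tsum_geo hβ]

lemma rp_gdiff {k : ℕ} {α β : ℝ} (hα : 0 < α) (hβ : 1 < β)
    {b₀ B₀ : Fin k → ℝ} (hb₀nn : ∀ i, 0 ≤ b₀ i) {x : ℕ → Fin k → ℝ}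
    (hx : ∀ n, ∃ i, x n = Pi.single i 1) (i : Fin k) (N : ℕ) :
    |rpG k α β b₀ B₀ x N i - rpGinf k α β B₀ x i|
      ≤ β⁻¹ ^ N * (b₀ i + α * (β - 1)⁻¹) := by
  have hβ0 : (0:ℝ) < β := lt_trans one_pos hβ
  have h0 : (0:ℝ) ≤ β⁻¹ := inv_nonneg.mpr hβ0.le
  obtain ⟨ht0, ht1⟩ := rp_tail hβ hx α hα i N
  have hpN : (0:ℝ) ≤ β⁻¹ ^ N := pow_nonneg h0 _
  have : rpG k α β b₀ B₀ x N i - rpGinf k α β B₀ x i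
      = β⁻¹ ^ N * b₀ i - α * ((∑' n : ℕ, β⁻¹ ^ (n + 1) * x n i)
        - ∑ m ∈ Finset.range N, β⁻¹ ^ (m + 1) * x m i) := by
    simp only [rpG, rpGinf]; ring
  rw [this, abs_le]
  constructor
  · nlinarith [mul_nonneg hpN (hb₀nn i), mul_nonneg hα.le ht0,
      mul_le_mul_of_nonneg_left ht1 hα.le]
  · nlinarith [mul_nonneg hpN (hb₀nn i), mul_nonneg hα.le ht0,
      mul_le_mul_of_nonneg_left ht1 hα.le]

lemma rp_gN_nonneg {k : ℕ} {α β : ℝ} (hα : 0 < α) (hβ : 1 < β)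
    {b₀ B₀ : Fin k → ℝ} (hb₀nn : ∀ i, 0 ≤ b₀ i) (hB₀nn : ∀ i, 0 ≤ B₀ i)
    {x : ℕ → Fin k → ℝ} (hx : ∀ n, ∃ i, x n = Pi.single i 1) (N : ℕ) (i : Fin k) :
    0 ≤ rpG k α β b₀ B₀ x N i := by
  have h0 : (0:ℝ) ≤ β⁻¹ := inv_nonneg.mpr (lt_trans one_pos hβ).le
  have h1 := Finset.sum_nonneg (fun m (_ : m ∈ Finset.range N) =>
    mul_nonneg (pow_nonneg h0 (m+1)) (rp_x01 hx m i).1)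
  have h2 := mul_nonneg (pow_nonneg h0 N) (hb₀nn i)
  unfold rpG
  have h3 := mul_nonneg hα.le h1
  linarith [hB₀nn i]

lemma rp_ginf_nonneg {k : ℕ} {α β : ℝ} (hα : 0 < α) (hβ : 1 < β)
    {B₀ : Fin k → ℝ} (hB₀nn : ∀ i, 0 ≤ B₀ i)
    {x : ℕ → Fin k → ℝ} (hx : ∀ n, ∃ i, x n = Pi.single i 1) (i : Fin k) :
    0 ≤ rpGinf k α β B₀ x i := by
  have h0 : (0:ℝ) ≤ β⁻¹ := inv_nonneg.mpr (lt_trans one_pos hβ).le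
  have ht : (0:ℝ) ≤ ∑' n : ℕ, β⁻¹ ^ (n + 1) * x n i :=
    tsum_nonneg fun n => mul_nonneg (pow_nonneg h0 _) (rp_x01 hx n i).1
  unfold rpGinf
  have := mul_nonneg hα.le ht
  linarith [hB₀nn i]

lemma rp_Dinf {k : ℕ} {α β : ℝ} (hβ : 1 < β)
    {B₀ : Fin k → ℝ} {x : ℕ → Fin k → ℝ} (hx : ∀ n, ∃ i, x n = Pi.single i 1)
    (hk : 1 ≤ k) :
    ∑ j, rpGinf k α β B₀ x j = (∑ j, B₀ j) + α * (β - 1)⁻¹ := by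
  unfold rpGinf
  rw [Finset.sum_add_distrib]
  congr 1
  rw [← Finset.mul_sum]
  congr 1
  rw [← Summable.tsum_finsetSum (fun j _ => rp_summable hβ hx j)]
  calc ∑' n : ℕ, ∑ j, β⁻¹ ^ (n + 1) * x n j
      = ∑' n : ℕ, β⁻¹ ^ (n + 1) := by
        refine tsum_congr fun n => ?_
        rw [← Finset.mul_sum, rp_xsum hx hk n, mul_one]
    _ = (β - 1)⁻¹ := rp_tsum_geo hβ

lemma rp_DN {k : ℕ} {α β : ℝ} {b₀ B₀ : Fin k → ℝ} {x : ℕ → Fin k → ℝ}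
    (hx : ∀ n, ∃ i, x n = Pi.single i 1) (hk : 1 ≤ k) (N : ℕ) :
    ∑ j, rpG k α β b₀ B₀ x N j
      = β⁻¹ ^ N * (∑ j, b₀ j) + (∑ j, B₀ j)
        + α * ∑ m ∈ Finset.range N, β⁻¹ ^ (m + 1) := by
  unfold rpG
  rw [Finset.sum_add_distrib, Finset.sum_add_distrib, ← Finset.mul_sum, ← Finset.mul_sum]
  congr 2
  rw [Finset.sum_comm]
  refine Finset.sum_congr rfl fun m _ => ?_
  rw [← Finset.mul_sum, rp_xsum hx hk m, mul_one]

lemma rp_DN_lb {k : ℕ} {α β : ℝ} (hα : 0 < α) (hβ : 1 < β)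
    {b₀ B₀ : Fin k → ℝ} (hb₀nn : ∀ i, 0 ≤ b₀ i) (hB₀nn : ∀ i, 0 ≤ B₀ i)
    {x : ℕ → Fin k → ℝ} (hx : ∀ n, ∃ i, x n = Pi.single i 1) (hk : 1 ≤ k) (N : ℕ) :
    min (∑ j, b₀ j) (α * β⁻¹) ≤ ∑ j, rpG k α β b₀ B₀ x N j := by
  have hβ0 : (0:ℝ) < β := lt_trans one_pos hβ
  have h0 : (0:ℝ) ≤ β⁻¹ := inv_nonneg.mpr hβ0.le
  have hB : (0:ℝ) ≤ ∑ j, B₀ j := Finset.sum_nonneg fun j _ => hB₀nn j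
  have hb : (0:ℝ) ≤ ∑ j, b₀ j := Finset.sum_nonneg fun j _ => hb₀nn j
  rw [rp_DN hx hk]
  rcases Nat.eq_zero_or_pos N with h | h
  · subst h
    simp only [pow_zero, one_mul, Finset.range_zero, Finset.sum_empty, mul_zero, add_zero]
    exact (min_le_left _ _).trans (by linarith)
  · have hmem : 0 ∈ Finset.range N := Finset.mem_range.mpr h
    have h1 : β⁻¹ ^ (0 + 1) ≤ ∑ m ∈ Finset.range N, β⁻¹ ^ (m + 1) :=
      Finset.single_le_sum (f := fun m => β⁻¹ ^ (m+1)) (fun m _ => pow_nonneg h0 _) hmem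
    have h2 : α * β⁻¹ ≤ α * ∑ m ∈ Finset.range N, β⁻¹ ^ (m + 1) := by
      refine mul_le_mul_of_nonneg_left ?_ hα.le
      simpa using h1
    have h3 : (0:ℝ) ≤ β⁻¹ ^ N * (∑ j, b₀ j) := mul_nonneg (pow_nonneg h0 _) hb
    exact (min_le_right _ _).trans (by linarith)

lemma rp_diff_sum {k : ℕ} {α β : ℝ} (hα : 0 < α) (hβ : 1 < β)
    {b₀ B₀ : Fin k → ℝ} (hb₀nn : ∀ i, 0 ≤ b₀ i)
    {x : ℕ → Fin k → ℝ} (hx : ∀ n, ∃ i, x n = Pi.single i 1) (N : ℕ) :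
    ∑ i, |rpG k α β b₀ B₀ x N i - rpGinf k α β B₀ x i|
      ≤ β⁻¹ ^ N * ((∑ i, b₀ i) + k * (α * (β - 1)⁻¹)) := by
  calc ∑ i, |rpG k α β b₀ B₀ x N i - rpGinf k α β B₀ x i|
      ≤ ∑ i : Fin k, β⁻¹ ^ N * (b₀ i + α * (β - 1)⁻¹) :=
        Finset.sum_le_sum fun i _ => rp_gdiff hα hβ hb₀nn hx i N
    _ = β⁻¹ ^ N * ((∑ i, b₀ i) + k * (α * (β - 1)⁻¹)) := by
        rw [← Finset.mul_sum, Finset.sum_add_distrib, Finset.sum_const]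
        simp [Finset.card_univ]

lemma rp_master {k : ℕ} {α β : ℝ} (hα : 0 < α) (hβ : 1 < β)
    {b₀ B₀ : Fin k → ℝ} (hb₀nn : ∀ i, 0 ≤ b₀ i) (hB₀nn : ∀ i, 0 ≤ B₀ i)
    (hb₀pos : 0 < ∑ i, b₀ i)
    {x : ℕ → Fin k → ℝ} (hx : ∀ n, ∃ i, x n = Pi.single i 1) (hk : 1 ≤ k) (N : ℕ) :
    ∑ i, |rpG k α β b₀ B₀ x N i / (∑ j, rpG k α β b₀ B₀ x N j)
          - rpGinf k α β B₀ x i / (∑ j, rpGinf k α β B₀ x j)|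
      ≤ (2 * ((∑ i, b₀ i) + k * (α * (β - 1)⁻¹)) / min (∑ j, b₀ j) (α * β⁻¹)) * β⁻¹ ^ N := by
  have hβ0 : (0:ℝ) < β := lt_trans one_pos hβ
  have hβi : (0:ℝ) < β⁻¹ := inv_pos.mpr hβ0
  have hβ1 : (0:ℝ) < β - 1 := by linarith
  set DN := ∑ j, rpG k α β b₀ B₀ x N j with hDN
  set Di := ∑ j, rpGinf k α β B₀ x j with hDi
  set c := min (∑ j, b₀ j) (α * β⁻¹) with hc
  set K := (∑ i, b₀ i) + k * (α * (β - 1)⁻¹) with hK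
  have hcpos : 0 < c := lt_min hb₀pos (mul_pos hα hβi)
  have hcDN : c ≤ DN := rp_DN_lb hα hβ hb₀nn hB₀nn hx hk N
  have hDNpos : 0 < DN := lt_of_lt_of_le hcpos hcDN
  have hDipos : 0 < Di := by
    rw [hDi, rp_Dinf hβ hx hk]
    have : (0:ℝ) ≤ ∑ j, B₀ j := Finset.sum_nonneg fun j _ => hB₀nn j
    have : 0 < α * (β - 1)⁻¹ := mul_pos hα (inv_pos.mpr hβ1)
    linarith
  have hKpos : 0 ≤ K := by
    have h1 : (0:ℝ) ≤ (k:ℝ) * (α * (β - 1)⁻¹) :=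
      mul_nonneg (Nat.cast_nonneg k) (mul_pos hα (inv_pos.mpr hβ1)).le
    rw [hK]; linarith
  have hdiffD : |Di - DN| ≤ β⁻¹ ^ N * K := by
    have h1 : Di - DN = ∑ i, (rpGinf k α β B₀ x i - rpG k α β b₀ B₀ x N i) := by
      rw [hDi, hDN, Finset.sum_sub_distrib]
    rw [h1]
    calc |∑ i, (rpGinf k α β B₀ x i - rpG k α β b₀ B₀ x N i)|
        ≤ ∑ i, |rpGinf k α β B₀ x i - rpG k α β b₀ B₀ x N i| :=
          Finset.abs_sum_le_sum_abs _ _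
      _ = ∑ i, |rpG k α β b₀ B₀ x N i - rpGinf k α β B₀ x i| := by
          refine Finset.sum_congr rfl fun i _ => abs_sub_comm _ _
      _ ≤ β⁻¹ ^ N * K := rp_diff_sum hα hβ hb₀nn hx N
  have hper : ∀ i, |rpG k α β b₀ B₀ x N i / DN - rpGinf k α β B₀ x i / Di|
      ≤ (|rpG k α β b₀ B₀ x N i - rpGinf k α β B₀ x i|
          + rpGinf k α β B₀ x i * |Di - DN| / Di) / c := by
    intro i
    set a := rpG k α β b₀ B₀ x N i
    set a' := rpGinf k α β B₀ x i
    have ha' : 0 ≤ a' := rp_ginf_nonneg hα hβ hB₀nn hx i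
    have hid : a / DN - a' / Di = ((a - a') + a' * (Di - DN) / Di) / DN := by
      field_simp
      ring
    rw [hid]
    have hnum : |(a - a') + a' * (Di - DN) / Di| ≤ |a - a'| + a' * |Di - DN| / Di := by
      refine (abs_add_le _ _).trans ?_
      have : |a' * (Di - DN) / Di| = a' * |Di - DN| / Di := by
        rw [abs_div, abs_mul, abs_of_nonneg ha', abs_of_pos hDipos]
      rw [this]
    calc |((a - a') + a' * (Di - DN) / Di) / DN|
        = |(a - a') + a' * (Di - DN) / Di| / DN := by
          rw [abs_div, abs_of_pos hDNpos]
      _ ≤ (|a - a'| + a' * |Di - DN| / Di) / c :=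
          div_le_div₀ (by positivity) hnum hcpos hcDN
  calc ∑ i, |rpG k α β b₀ B₀ x N i / DN - rpGinf k α β B₀ x i / Di|
      ≤ ∑ i, (|rpG k α β b₀ B₀ x N i - rpGinf k α β B₀ x i|
          + rpGinf k α β B₀ x i * |Di - DN| / Di) / c :=
        Finset.sum_le_sum fun i _ => hper i
    _ = ((∑ i, |rpG k α β b₀ B₀ x N i - rpGinf k α β B₀ x i|)
          + Di * (|Di - DN| / Di)) / c := by
        rw [← Finset.sum_div, Finset.sum_add_distrib]
        congr 2
        simp only [mul_div_assoc]
        rw [← Finset.sum_mul]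
    _ = ((∑ i, |rpG k α β b₀ B₀ x N i - rpGinf k α β B₀ x i|) + |Di - DN|) / c := by
        rw [← mul_div_assoc, mul_div_cancel_left₀ _ (ne_of_gt hDipos)]
    _ ≤ (β⁻¹ ^ N * K + β⁻¹ ^ N * K) / c := by
        have h2 := rp_diff_sum (B₀ := B₀) hα hβ hb₀nn hx N
        gcongr
    _ = (2 * K / c) * β⁻¹ ^ N := by ring

end RPAux

/-- **Rescaled Pólya urn, `β > 1`** (Theorem 3.5): the predictive mean `ψ_N` converges a.s.
to `ψ_∞ = (B₀ + α ∑_{n≥1} β^{-n} ξ_n)/(|B₀| + α/(β−1))`, with `|ψ_N − ψ_∞| = O(β^{-N})`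
(`ℓ¹` norm); `ψ_∞` takes values in the simplex, and if `B₀ i > 0` for all `i` then a.s.
`ψ_{∞,i} ∈ (0,1)` for each `i`. -/
theorem rp_urn_psi_convergence_beta_gt_one
    {Ω : Type*} {mΩ : MeasurableSpace Ω} {μ : Measure Ω} [IsProbabilityMeasure μ]
    (k : ℕ) (hk : 2 ≤ k)
    (α β : ℝ) (hα : 0 < α) (hβ : 1 < β)
    (b₀ B₀ : Fin k → ℝ) (hb₀nn : ∀ i, 0 ≤ b₀ i) (hB₀nn : ∀ i, 0 ≤ B₀ i)
    (hb₀pos : 0 < ∑ i, b₀ i) (hbB : ∀ i, 0 < b₀ i + B₀ i)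
    (ξ B : ℕ → Ω → Fin k → ℝ) (ℱ : Filtration ℕ mΩ)
    (hξval : ∀ n, 1 ≤ n → ∀ ω, ∃ i, ξ n ω = Pi.single i 1)
    (hadapt : ∀ n, 1 ≤ n → Measurable[ℱ n] (ξ n))
    (hB0 : ∀ ω, B 0 ω = B₀)
    (hBrec : ∀ n ω, B (n + 1) ω = β • B n ω + α • ξ (n + 1) ω)
    (ψ : ℕ → Ω → Fin k → ℝ)
    (hψ : ∀ n ω i, ψ n ω i = (b₀ i + B n ω i) / ∑ j, (b₀ j + B n ω j))
    (hcond : ∀ n i, μ[fun ω => ξ (n + 1) ω i | ℱ n] =ᵐ[μ] fun ω => ψ n ω i)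
    (ψinf : Ω → Fin k → ℝ)
    (hψinf : ∀ ω i,
      ψinf ω i = (B₀ i + α * ∑' n : ℕ, β⁻¹ ^ (n + 1) * ξ (n + 1) ω i)
          / ((∑ j, B₀ j) + α / (β - 1))) :
    (∀ᵐ ω ∂μ, Tendsto (fun N : ℕ => ψ N ω) atTop (nhds (ψinf ω)))
      ∧
    (∃ C : ℝ, ∀ᵐ ω ∂μ, ∀ N : ℕ, ∑ i, |ψ N ω i - ψinf ω i| ≤ C * β⁻¹ ^ N)
      ∧
    (∀ᵐ ω ∂μ, (∀ i, ψinf ω i ∈ Set.Icc (0 : ℝ) 1) ∧ ∑ i, ψinf ω i = 1)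
      ∧
    ((∀ i, 0 < B₀ i) → ∀ᵐ ω ∂μ, ∀ i, ψinf ω i ∈ Set.Ioo (0 : ℝ) 1) := by
  have hβ0 : (0:ℝ) < β := lt_trans one_pos hβ
  have hβi0 : (0:ℝ) ≤ β⁻¹ := inv_nonneg.mpr hβ0.le
  have hβi1 : β⁻¹ < 1 := inv_lt_one_of_one_lt₀ hβ
  have hβ1 : (0:ℝ) < β - 1 := by linarith
  have hk1 : 1 ≤ k := le_trans one_le_two hk
  have hx : ∀ ω, ∀ n : ℕ, ∃ i, (fun m => ξ (m + 1) ω) n = Pi.single i 1 :=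
    fun ω n => hξval (n + 1) (Nat.le_add_left 1 n) ω
  have hp : ∀ N : ℕ, β ^ N * β⁻¹ ^ N = 1 := by
    intro N
    rw [← mul_pow, mul_inv_cancel₀ (ne_of_gt hβ0), one_pow]
  -- B formula
  have hBf : ∀ ω n i, B n ω i
      = β ^ n * (B₀ i + α * ∑ m ∈ Finset.range n, β⁻¹ ^ (m + 1) * ξ (m + 1) ω i) := by
    intro ω n
    induction n with
    | zero => intro i; simp [hB0 ω]
    | succ n ih =>
      intro i
      have hr := hBrec n ω
      have : B (n+1) ω i = β * B n ω i + α * ξ (n+1) ω i := by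
        rw [hr]; simp [Pi.add_apply, Pi.smul_apply, smul_eq_mul]
      rw [this, ih i, Finset.sum_range_succ]
      linear_combination (-(α * ξ (n+1) ω i)) * hp (n+1)
  -- ψ in terms of rpG
  have hψG : ∀ ω N i, ψ N ω i
      = rpG k α β b₀ B₀ (fun m => ξ (m + 1) ω) N i
        / ∑ j, rpG k α β b₀ B₀ (fun m => ξ (m + 1) ω) N j := by
    intro ω N i
    have hnum : ∀ j, b₀ j + B N ω j = β ^ N * rpG k α β b₀ B₀ (fun m => ξ (m + 1) ω) N j := by
      intro j
      rw [hBf ω N j]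
      unfold rpG
      linear_combination (-(b₀ j)) * hp N
    rw [hψ N ω i]
    simp_rw [hnum]
    rw [← Finset.mul_sum, mul_div_mul_left _ _ (pow_ne_zero N (ne_of_gt hβ0))]
  -- ψinf in terms of rpGinf
  have hψiG : ∀ ω i, ψinf ω i
      = rpGinf k α β B₀ (fun m => ξ (m + 1) ω) i
        / ∑ j, rpGinf k α β B₀ (fun m => ξ (m + 1) ω) j := by
    intro ω i
    rw [hψinf ω i, rp_Dinf hβ (hx ω) hk1]
    unfold rpGinf
    rw [div_eq_mul_inv α (β - 1)]
  -- quantitative bound, pointwise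
  set C : ℝ := 2 * ((∑ i, b₀ i) + k * (α * (β - 1)⁻¹)) / min (∑ j, b₀ j) (α * β⁻¹) with hC
  have hbound : ∀ ω N, ∑ i, |ψ N ω i - ψinf ω i| ≤ C * β⁻¹ ^ N := by
    intro ω N
    simp_rw [hψG ω N, hψiG ω]
    exact rp_master hα hβ hb₀nn hB₀nn hb₀pos (hx ω) hk1 N
  -- positivity of Dinf
  have hDipos : ∀ ω, 0 < ∑ j, rpGinf k α β B₀ (fun m => ξ (m + 1) ω) j := by
    intro ω
    rw [rp_Dinf hβ (hx ω) hk1]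
    have h1 : (0:ℝ) ≤ ∑ j, B₀ j := Finset.sum_nonneg fun j _ => hB₀nn j
    have h2 : 0 < α * (β - 1)⁻¹ := mul_pos hα (inv_pos.mpr hβ1)
    linarith
  refine ⟨?_, ⟨C, ?_⟩, ?_, ?_⟩
  · -- convergence
    refine Filter.Eventually.of_forall fun ω => ?_
    rw [tendsto_pi_nhds]
    intro i
    rw [tendsto_iff_dist_tendsto_zero]
    simp only [Real.dist_eq]
    refine squeeze_zero (g := fun N => C * β⁻¹ ^ N) (fun N => abs_nonneg _) (fun N => ?_) ?_
    · calc |ψ N ω i - ψinf ω i|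
          ≤ ∑ j, |ψ N ω j - ψinf ω j| :=
            Finset.single_le_sum (f := fun j => |ψ N ω j - ψinf ω j|)
              (fun j _ => abs_nonneg _) (Finset.mem_univ i)
        _ ≤ C * β⁻¹ ^ N := hbound ω N
    · simpa using (tendsto_pow_atTop_nhds_zero_of_lt_one hβi0 hβi1).const_mul C
  · exact Filter.Eventually.of_forall fun ω => hbound ω
  · -- simplex
    refine Filter.Eventually.of_forall fun ω => ?_
    have hnn : ∀ i, 0 ≤ rpGinf k α β B₀ (fun m => ξ (m + 1) ω) i :=
      fun i => rp_ginf_nonneg hα hβ hB₀nn (hx ω) i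
    constructor
    · intro i
      rw [hψiG ω i]
      constructor
      · exact div_nonneg (hnn i) (hDipos ω).le
      · rw [div_le_one (hDipos ω)]
        exact Finset.single_le_sum (fun j _ => hnn j) (Finset.mem_univ i)
    · simp_rw [hψiG ω]
      rw [← Finset.sum_div, div_self (ne_of_gt (hDipos ω))]
  · -- interior
    intro hBpos
    refine Filter.Eventually.of_forall fun ω => fun i => ?_
    have hnn : ∀ j, 0 ≤ rpGinf k α β B₀ (fun m => ξ (m + 1) ω) j :=
      fun j => rp_ginf_nonneg hα hβ hB₀nn (hx ω) j
    have hpos : ∀ j, 0 < rpGinf k α β B₀ (fun m => ξ (m + 1) ω) j := by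
      intro j
      have ht : (0:ℝ) ≤ ∑' n : ℕ, β⁻¹ ^ (n + 1) * ξ (n + 1) ω j :=
        tsum_nonneg fun n => mul_nonneg (pow_nonneg hβi0 _) (rp_x01 (hx ω) n j).1
      have := mul_nonneg hα.le ht
      unfold rpGinf
      have := hBpos j
      linarith
    haveI : Nontrivial (Fin k) := Fin.nontrivial_iff_two_le.mpr hk
    obtain ⟨j, hj⟩ := exists_ne i
    rw [hψiG ω i]
    constructor
    · exact div_pos (hpos i) (hDipos ω)
    · rw [div_lt_one (hDipos ω)]
      exact Finset.single_lt_sum hj (Finset.mem_univ i) (Finset.mem_univ j)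
        (hpos j) (fun t _ _ => hnn t)
end

section
/- Let S* = {x ∈ ℝ^k : xᵢ ≥ 0, Σᵢ xᵢ = 1} be the standard simplex and {e₁,…,e_k} the canonical basis of ℝ^k. There exist two measurable functions h⁽¹⁾, h⁽²⁾ : S* × S* × (0,1) → {e₁,…,e_k} such that for all x, y ∈ S*: (i) ∫₀¹ 1{h⁽¹⁾(x,y,u) = eᵢ} du = xᵢ and ∫₀¹ 1{h⁽²⁾(x,y,u) = eᵢ} du = yᵢ for every i = 1,…,k; (ii) ∫₀¹ 1{h⁽¹⁾(x,y,u) ≠ h⁽²⁾(x,y,u)} du ≤ |x − y|/2; and consequently (iii) ∫₀¹ |h⁽¹⁾(x,y,u) − h⁽²⁾(x,y,u)| du ≤ |x − y|, where |·| is the ℓ¹ norm on ℝ^k. -/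
open MeasureTheory

namespace SC

open Finset

variable {k : ℕ}

/-- cumulative sum including `i` -/
noncomputable def cIic (w : Fin k → ℝ) (i : Fin k) : ℝ := ∑ j ∈ Finset.Iic i, w j
/-- cumulative sum strictly below `i` -/
noncomputable def cIio (w : Fin k → ℝ) (i : Fin k) : ℝ := ∑ j ∈ Finset.Iio i, w j

open scoped Classical in
noncomputable def Ncnt (w : Fin k → ℝ) (u : ℝ) : ℕ :=
  (Finset.univ.filter fun j : Fin k => cIic w j ≤ u).card

noncomputable def idx (hk : 0 < k) (w : Fin k → ℝ) (u : ℝ) : Fin k :=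
  ⟨min (k - 1) (Ncnt w u), by omega⟩

lemma cIic_eq (w : Fin k → ℝ) (i : Fin k) : cIic w i = w i + cIio w i := by
  rw [cIic, cIio, ← Finset.Iio_insert, Finset.sum_insert (by simp)]

lemma cIio_nonneg {w : Fin k → ℝ} (hw : ∀ j, 0 ≤ w j) (i : Fin k) : 0 ≤ cIio w i :=
  Finset.sum_nonneg fun j _ => hw j

lemma cIic_le_total {w : Fin k → ℝ} (hw : ∀ j, 0 ≤ w j) (i : Fin k) :
    cIic w i ≤ ∑ j, w j :=
  Finset.sum_le_sum_of_subset_of_nonneg (Finset.subset_univ _) fun j _ _ => hw j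

lemma Iic_last (hk : 0 < k) : Finset.Iic (⟨k - 1, by omega⟩ : Fin k) = Finset.univ := by
  ext a; simp [Fin.le_def]; omega

lemma cIic_last (hk : 0 < k) (w : Fin k → ℝ) :
    cIic w ⟨k - 1, by omega⟩ = ∑ j, w j := by
  rw [cIic, Iic_last hk]

open scoped Classical in
lemma filter_eq {w : Fin k → ℝ} (hw : ∀ j, 0 ≤ w j) (i : Fin k) (u : ℝ)
    (h1 : cIio w i ≤ u) (h2 : u < cIic w i) :
    (Finset.univ.filter fun j : Fin k => cIic w j ≤ u) = Finset.Iio i := by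
  ext j
  simp only [mem_filter, mem_univ, true_and, Finset.mem_Iio]
  constructor
  · intro hj
    by_contra hij
    push_neg at hij
    have : cIic w i ≤ cIic w j :=
      Finset.sum_le_sum_of_subset_of_nonneg (Finset.Iic_subset_Iic.2 hij)
        fun a _ _ => hw a
    linarith
  · intro hij
    have : cIic w j ≤ cIio w i := by
      refine Finset.sum_le_sum_of_subset_of_nonneg ?_ fun a _ _ => hw a
      intro a ha
      simp only [Finset.mem_Iic] at ha
      simp only [Finset.mem_Iio]
      exact lt_of_le_of_lt ha hij
    linarith

lemma idx_eq (hk : 0 < k) {w : Fin k → ℝ} (hw : ∀ j, 0 ≤ w j) (i : Fin k) (u : ℝ)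
    (h1 : cIio w i ≤ u) (h2 : u < cIic w i) : idx hk w u = i := by
  have hN : Ncnt w u = i.val := by
    classical
    rw [Ncnt]
    rw [show (Finset.univ.filter fun j : Fin k => cIic w j ≤ u) = Finset.Iio i from
      filter_eq hw i u h1 h2]
    exact Fin.card_Iio i
  apply Fin.ext
  have := i.isLt
  simp only [idx, hN]
  omega

lemma Iio_val_zero (i : Fin k) (h : i.val = 0) : Finset.Iio i = ∅ := by
  ext a; simp only [Finset.mem_Iio, Finset.notMem_empty, iff_false, Fin.lt_def, h]; omega

lemma Iio_eq_Iic_pred (i : Fin k) (h : i.val ≠ 0) :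
    Finset.Iio i = Finset.Iic (⟨i.val - 1, by omega⟩ : Fin k) := by
  ext a; simp only [Finset.mem_Iio, Finset.mem_Iic, Fin.lt_def, Fin.le_def]; omega

lemma exists_mem (hk : 0 < k) {w : Fin k → ℝ} (hw : ∀ j, 0 ≤ w j) (u : ℝ)
    (h0 : 0 ≤ u) (h1 : u < ∑ j, w j) :
    ∃ i : Fin k, cIio w i ≤ u ∧ u < cIic w i := by
  classical
  set A := Finset.univ.filter fun j : Fin k => u < cIic w j with hA
  have hlast : (⟨k - 1, by omega⟩ : Fin k) ∈ A := by
    rw [hA, mem_filter]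
    refine ⟨mem_univ _, ?_⟩
    rw [cIic_last hk]; exact h1
  have hne : A.Nonempty := ⟨_, hlast⟩
  set i := A.min' hne with hi
  have hiA : i ∈ A := A.min'_mem hne
  have h2 : u < cIic w i := by
    rw [hA, mem_filter] at hiA; exact hiA.2
  refine ⟨i, ?_, h2⟩
  by_cases h : i.val = 0
  · rw [cIio, Iio_val_zero i h]; simpa using h0
  · set i' : Fin k := ⟨i.val - 1, by omega⟩ with hi'
    have hii' : i' < i := by simp [Fin.lt_def, hi']; omega
    have hni' : i' ∉ A := fun hmem => absurd (A.min'_le i' hmem) (not_le.2 hii')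
    have : ¬ u < cIic w i' := by
      intro hc; exact hni' (by rw [hA, mem_filter]; exact ⟨mem_univ _, hc⟩)
    push_neg at this
    rw [cIio, Iio_eq_Iic_pred i h]
    exact this


lemma measurable_cIic {α} [MeasurableSpace α] {w : α → Fin k → ℝ}
    (hw : ∀ j, Measurable fun a => w a j) (i : Fin k) :
    Measurable fun a => cIic (w a) i := by
  unfold cIic
  exact Finset.measurable_sum _ fun j _ => hw j

lemma measurable_idx {α} [MeasurableSpace α] (hk : 0 < k) {w : α → Fin k → ℝ}
    {u : α → ℝ} (hw : ∀ j, Measurable fun a => w a j) (hu : Measurable u) :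
    Measurable fun a => idx hk (w a) (u a) := by
  classical
  have hN : Measurable fun a => Ncnt (w a) (u a) := by
    have heq : (fun a => Ncnt (w a) (u a)) =
        fun a => ∑ j : Fin k, if cIic (w a) j ≤ u a then 1 else 0 := by
      funext a
      rw [Ncnt, Finset.card_filter]
    rw [heq]
    refine Finset.measurable_sum _ fun j _ => ?_
    exact Measurable.ite (measurableSet_le (measurable_cIic hw j) hu)
      measurable_const measurable_const
  exact (measurable_of_countable fun n : ℕ => (⟨min (k - 1) n, by omega⟩ : Fin k)).comp hN

open scoped Classical in
noncomputable def J (hk : 0 < k) (x y : Fin k → ℝ) (u : ℝ) : Fin k :=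
  if u < ∑ i, min (x i) (y i) then idx hk (fun i => min (x i) (y i)) u
  else idx hk (fun i => x i - min (x i) (y i)) (u - ∑ i, min (x i) (y i))

lemma measurable_J (hk : 0 < k) :
    Measurable fun p : (Fin k → ℝ) × (Fin k → ℝ) × ℝ => J hk p.1 p.2.1 p.2.2 := by
  classical
  have hx : ∀ j, Measurable fun p : (Fin k → ℝ) × (Fin k → ℝ) × ℝ => p.1 j :=
    fun j => (measurable_pi_apply j).comp measurable_fst
  have hy : ∀ j, Measurable fun p : (Fin k → ℝ) × (Fin k → ℝ) × ℝ => p.2.1 j :=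
    fun j => (measurable_pi_apply j).comp (measurable_fst.comp measurable_snd)
  have hu : Measurable fun p : (Fin k → ℝ) × (Fin k → ℝ) × ℝ => p.2.2 :=
    measurable_snd.comp measurable_snd
  have hm : ∀ j, Measurable fun p : (Fin k → ℝ) × (Fin k → ℝ) × ℝ =>
      min (p.1 j) (p.2.1 j) := fun j => (hx j).min (hy j)
  have hM : Measurable fun p : (Fin k → ℝ) × (Fin k → ℝ) × ℝ =>
      ∑ i, min (p.1 i) (p.2.1 i) := Finset.measurable_sum _ fun j _ => hm j
  have hcond : MeasurableSet {p : (Fin k → ℝ) × (Fin k → ℝ) × ℝ |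
      p.2.2 < ∑ i, min (p.1 i) (p.2.1 i)} := measurableSet_lt hu hM
  unfold J
  exact Measurable.ite hcond
    (measurable_idx hk (fun j => hm j) hu)
    (measurable_idx hk (fun j => (hx j).sub (hm j)) (hu.sub hM))


lemma vol_Ico_inter {a b : ℝ} (ha : 0 ≤ a) (hb : b ≤ 1) :
    volume (Set.Ico a b ∩ Set.Ioo (0:ℝ) 1) = ENNReal.ofReal (b - a) := by
  have hset : Set.Ico a b ∩ Set.Ioo (0:ℝ) 1 = Set.Ico a b \ {0} := by
    ext u
    simp only [Set.mem_inter_iff, Set.mem_Ico, Set.mem_Ioo, Set.mem_diff,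
      Set.mem_singleton_iff]
    constructor
    · rintro ⟨⟨h1, h2⟩, h3, _⟩; exact ⟨⟨h1, h2⟩, ne_of_gt h3⟩
    · rintro ⟨⟨h1, h2⟩, h3⟩
      exact ⟨⟨h1, h2⟩, lt_of_le_of_ne (le_trans ha h1) (Ne.symm h3),
        lt_of_lt_of_le h2 hb⟩
  rw [hset, measure_diff_null (measure_singleton 0), Real.volume_Ico]

/-- Key structural lemma: the fiber of the coupling index over `i`, inside `(0,1)`. -/
lemma fiber_generic (hk : 0 < k) (m w : Fin k → ℝ) (M : ℝ)
    (hm0 : ∀ j, 0 ≤ m j) (hw0 : ∀ j, 0 ≤ w j)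
    (hMtot : ∑ j, m j = M) (hwtot : ∑ j, w j = 1 - M) (i : Fin k) :
    Set.Ioo (0:ℝ) 1 ∩ {u | (if u < M then idx hk m u else idx hk w (u - M)) = i} =
      (Set.Ico (cIio m i) (cIic m i) ∪ Set.Ico (M + cIio w i) (M + cIic w i))
        ∩ Set.Ioo (0:ℝ) 1 := by
  ext u
  simp only [Set.mem_inter_iff, Set.mem_Ioo, Set.mem_setOf_eq, Set.mem_union,
    Set.mem_Ico]
  constructor
  · rintro ⟨⟨hu0, hu1⟩, hJ⟩
    refine ⟨?_, hu0, hu1⟩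
    by_cases hcase : u < M
    · left
      rw [if_pos hcase] at hJ
      obtain ⟨j, hj1, hj2⟩ := exists_mem hk hm0 u hu0.le (hMtot ▸ hcase)
      have hij : i = j := by rw [← hJ]; exact idx_eq hk hm0 j u hj1 hj2
      subst hij
      exact ⟨hj1, hj2⟩
    · right
      rw [if_neg hcase] at hJ
      push_neg at hcase
      have h1 : (0:ℝ) ≤ u - M := by linarith
      have h2 : u - M < ∑ j, w j := by rw [hwtot]; linarith
      obtain ⟨j, hj1, hj2⟩ := exists_mem hk hw0 (u - M) h1 h2
      have hij : i = j := by rw [← hJ]; exact idx_eq hk hw0 j (u - M) hj1 hj2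
      subst hij
      constructor <;> linarith
  · rintro ⟨hor, hu0, hu1⟩
    refine ⟨⟨hu0, hu1⟩, ?_⟩
    rcases hor with ⟨h1, h2⟩ | ⟨h1, h2⟩
    · have hlt : u < M := lt_of_lt_of_le h2 (hMtot ▸ cIic_le_total hm0 i)
      rw [if_pos hlt]
      exact idx_eq hk hm0 i u h1 h2
    · have hge : ¬ u < M := by
        have := cIio_nonneg hw0 i
        push_neg
        linarith
      rw [if_neg hge]
      exact idx_eq hk hw0 i (u - M) (by linarith) (by linarith)

lemma fiber_vol (hk : 0 < k) (m w : Fin k → ℝ) (M : ℝ)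
    (hm0 : ∀ j, 0 ≤ m j) (hw0 : ∀ j, 0 ≤ w j)
    (hMtot : ∑ j, m j = M) (hwtot : ∑ j, w j = 1 - M)
    (hM0 : 0 ≤ M) (hM1 : M ≤ 1) (i : Fin k) :
    volume (Set.Ioo (0:ℝ) 1 ∩
        {u | (if u < M then idx hk m u else idx hk w (u - M)) = i}) =
      ENNReal.ofReal (m i + w i) := by
  rw [fiber_generic hk m w M hm0 hw0 hMtot hwtot i,
    Set.union_inter_distrib_right]
  have hcm : cIic m i ≤ M := hMtot ▸ cIic_le_total hm0 i
  have hcw : cIic w i ≤ 1 - M := hwtot ▸ cIic_le_total hw0 i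
  have hdisj : Disjoint (Set.Ico (cIio m i) (cIic m i) ∩ Set.Ioo (0:ℝ) 1)
      (Set.Ico (M + cIio w i) (M + cIic w i) ∩ Set.Ioo (0:ℝ) 1) := by
    rw [Set.disjoint_left]
    rintro u ⟨⟨_, hu2⟩, _⟩ ⟨⟨hu3, _⟩, _⟩
    have := cIio_nonneg hw0 i
    linarith
  rw [measure_union hdisj (measurableSet_Ico.inter measurableSet_Ioo)]
  rw [vol_Ico_inter (cIio_nonneg hm0 i) (le_trans hcm hM1),
    vol_Ico_inter (by linarith [cIio_nonneg hw0 i]) (by linarith)]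
  rw [← ENNReal.ofReal_add (by rw [cIic_eq]; linarith [hm0 i])
    (by rw [cIic_eq]; linarith [hw0 i])]
  congr 1
  rw [cIic_eq m i, cIic_eq w i]
  ring

lemma J_law (hk : 0 < k) {x y : Fin k → ℝ} (hx : x ∈ stdSimplex ℝ (Fin k))
    (hy : y ∈ stdSimplex ℝ (Fin k)) (i : Fin k) :
    volume (Set.Ioo (0:ℝ) 1 ∩ {u | J hk x y u = i}) = ENNReal.ofReal (x i) := by
  have hm0 : ∀ j, 0 ≤ min (x j) (y j) := fun j => le_min (hx.1 j) (hy.1 j)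
  have hw0 : ∀ j, (0:ℝ) ≤ x j - min (x j) (y j) :=
    fun j => sub_nonneg.2 (min_le_left _ _)
  have hM0 : (0:ℝ) ≤ ∑ j, min (x j) (y j) := Finset.sum_nonneg fun j _ => hm0 j
  have hM1 : (∑ j, min (x j) (y j)) ≤ 1 := by
    rw [← hx.2]
    exact Finset.sum_le_sum fun j _ => min_le_left _ _
  have hwtot : (∑ j, (x j - min (x j) (y j))) = 1 - ∑ j, min (x j) (y j) := by
    rw [Finset.sum_sub_distrib, hx.2]
  have := fiber_vol hk (fun j => min (x j) (y j)) (fun j => x j - min (x j) (y j))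
    (∑ j, min (x j) (y j)) hm0 hw0 rfl hwtot hM0 hM1 i
  rw [show {u | J hk x y u = i} = {u | (if u < ∑ j, min (x j) (y j) then
      idx hk (fun j => min (x j) (y j)) u
      else idx hk (fun j => x j - min (x j) (y j))
        (u - ∑ j, min (x j) (y j))) = i} from rfl]
  rw [this]
  congr 1
  ring

lemma J_ne_subset (hk : 0 < k) (x y : Fin k → ℝ) :
    Set.Ioo (0:ℝ) 1 ∩ {u | J hk x y u ≠ J hk y x u} ⊆
      Set.Ico (∑ i, min (x i) (y i)) 1 := by
  rintro u ⟨⟨hu0, hu1⟩, hne⟩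
  refine ⟨?_, hu1⟩
  by_contra hlt
  push_neg at hlt
  apply hne
  have hsym : (∑ i, min (y i) (x i)) = ∑ i, min (x i) (y i) :=
    Finset.sum_congr rfl fun i _ => min_comm _ _
  have hfun : (fun i => min (y i) (x i)) = fun i => min (x i) (y i) := by
    funext i; exact min_comm _ _
  rw [J, J, if_pos hlt, if_pos (by rw [hsym]; exact hlt), hfun]

lemma single_inj {i j : Fin k} (h : (Pi.single i 1 : Fin k → ℝ) = Pi.single j 1) :
    i = j := by
  by_contra hne
  have := congrFun h i
  rw [Pi.single_eq_same, Pi.single_eq_of_ne hne] at this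
  exact one_ne_zero this

end SC

/-- **Lemma A.7 (coupling functions on the simplex)**: there exist measurable
`h⁽¹⁾, h⁽²⁾ : S* × S* × (0,1) → {e₁,…,e_k}` such that `h⁽¹⁾(x,y,·)` has law `x`,
`h⁽²⁾(x,y,·)` has law `y`, they differ on a set of measure at most `|x−y|/2`, and
`∫ |h⁽¹⁾ − h⁽²⁾| du ≤ |x−y|` (`ℓ¹` norm). -/
theorem simplex_coupling_functions (k : ℕ) (hk : 2 ≤ k) :
    ∃ h₁ h₂ : (Fin k → ℝ) → (Fin k → ℝ) → ℝ → (Fin k → ℝ),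
      Measurable (fun p : (Fin k → ℝ) × (Fin k → ℝ) × ℝ => h₁ p.1 p.2.1 p.2.2) ∧
      Measurable (fun p : (Fin k → ℝ) × (Fin k → ℝ) × ℝ => h₂ p.1 p.2.1 p.2.2) ∧
      ∀ x ∈ stdSimplex ℝ (Fin k), ∀ y ∈ stdSimplex ℝ (Fin k),
        (∀ u ∈ Set.Ioo (0 : ℝ) 1,
          (∃ i, h₁ x y u = Pi.single i 1) ∧ (∃ i, h₂ x y u = Pi.single i 1)) ∧
        (∀ i, (∫ u in Set.Ioo (0 : ℝ) 1,
            Set.indicator {u | h₁ x y u = Pi.single i 1} (fun _ => (1 : ℝ)) u) = x i) ∧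
        (∀ i, (∫ u in Set.Ioo (0 : ℝ) 1,
            Set.indicator {u | h₂ x y u = Pi.single i 1} (fun _ => (1 : ℝ)) u) = y i) ∧
        (∫ u in Set.Ioo (0 : ℝ) 1,
            Set.indicator {u | h₁ x y u ≠ h₂ x y u} (fun _ => (1 : ℝ)) u)
          ≤ (∑ i, |x i - y i|) / 2 ∧
        (∫ u in Set.Ioo (0 : ℝ) 1, ∑ i, |h₁ x y u i - h₂ x y u i|)
          ≤ ∑ i, |x i - y i| := by
  have hk0 : 0 < k := by omega
  classical
  refine ⟨fun x y u => Pi.single (SC.J hk0 x y u) 1,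
    fun x y u => Pi.single (SC.J hk0 y x u) 1, ?_, ?_, ?_⟩
  · exact (measurable_of_countable fun i : Fin k => (Pi.single i 1 : Fin k → ℝ)).comp
      (SC.measurable_J hk0)
  · refine (measurable_of_countable fun i : Fin k => (Pi.single i 1 : Fin k → ℝ)).comp ?_
    exact (SC.measurable_J hk0).comp
      ((measurable_fst.comp measurable_snd).prodMk
        (measurable_fst.prodMk (measurable_snd.comp measurable_snd)))
  intro x hx y hy
  -- measurability of sections
  have hJ1 : Measurable fun u : ℝ => SC.J hk0 x y u :=
    (SC.measurable_J hk0).comp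
      (measurable_const.prodMk (measurable_const.prodMk measurable_id))
  have hJ2 : Measurable fun u : ℝ => SC.J hk0 y x u :=
    (SC.measurable_J hk0).comp
      (measurable_const.prodMk (measurable_const.prodMk measurable_id))
  -- the generic law computation
  have law : ∀ (a b : Fin k → ℝ), a ∈ stdSimplex ℝ (Fin k) →
      b ∈ stdSimplex ℝ (Fin k) → Measurable (fun u : ℝ => SC.J hk0 a b u) →
      ∀ i, (∫ u in Set.Ioo (0 : ℝ) 1,
        Set.indicator {u | (Pi.single (SC.J hk0 a b u) 1 : Fin k → ℝ) = Pi.single i 1}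
          (fun _ => (1 : ℝ)) u) = a i := by
    intro a b ha hb hJ i
    have hset : {u : ℝ | (Pi.single (SC.J hk0 a b u) 1 : Fin k → ℝ) = Pi.single i 1}
        = {u | SC.J hk0 a b u = i} := by
      ext u
      simp only [Set.mem_setOf_eq]
      exact ⟨fun h => SC.single_inj h, fun h => by rw [h]⟩
    rw [hset, setIntegral_indicator
      (show MeasurableSet {u : ℝ | SC.J hk0 a b u = i} from hJ (measurableSet_singleton i)),
      setIntegral_const, measureReal_def, SC.J_law hk0 ha hb i, smul_eq_mul, mul_one,
      ENNReal.toReal_ofReal (ha.1 i)]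
  -- difference set facts
  have hm0 : ∀ j, 0 ≤ min (x j) (y j) := fun j => le_min (hx.1 j) (hy.1 j)
  have hM0 : (0:ℝ) ≤ ∑ j, min (x j) (y j) := Finset.sum_nonneg fun j _ => hm0 j
  have hM1 : (∑ j, min (x j) (y j)) ≤ 1 := by
    rw [← hx.2]
    exact Finset.sum_le_sum fun j _ => min_le_left _ _
  have habs : (∑ i, |x i - y i|) = 2 - 2 * ∑ j, min (x j) (y j) := by
    have h1 : ∀ i, |x i - y i| = x i + y i - 2 * min (x i) (y i) := by
      intro i
      rcases le_total (x i) (y i) with h | h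
      · rw [abs_of_nonpos (by linarith), min_eq_left h]; ring
      · rw [abs_of_nonneg (by linarith), min_eq_right h]; ring
    rw [Finset.sum_congr rfl fun i _ => h1 i]
    rw [Finset.sum_sub_distrib, Finset.sum_add_distrib, hx.2, hy.2, ← Finset.mul_sum]
    ring
  have hDset : {u : ℝ | (Pi.single (SC.J hk0 x y u) 1 : Fin k → ℝ) ≠
      Pi.single (SC.J hk0 y x u) 1} = {u | SC.J hk0 x y u ≠ SC.J hk0 y x u} := by
    ext u
    constructor
    · intro h hc; exact h (by rw [hc])
    · intro h hc; exact h (SC.single_inj hc)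
  have hDmeas : MeasurableSet {u : ℝ | SC.J hk0 x y u ≠ SC.J hk0 y x u} := by
    have : {u : ℝ | SC.J hk0 x y u ≠ SC.J hk0 y x u} =
        ⋃ i : Fin k, ((fun u => SC.J hk0 x y u) ⁻¹' {i}) ∩
          ((fun u => SC.J hk0 y x u) ⁻¹' {i})ᶜ := by
      ext u
      simp only [Set.mem_setOf_eq, Set.mem_iUnion, Set.mem_inter_iff,
        Set.mem_preimage, Set.mem_singleton_iff, Set.mem_compl_iff]
      constructor
      · intro h; exact ⟨SC.J hk0 x y u, rfl, fun hc => h hc.symm⟩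
      · rintro ⟨i, h1, h2⟩ hc; exact h2 (by rw [← hc, h1])
    rw [this]
    exact MeasurableSet.iUnion fun i =>
      (hJ1 (measurableSet_singleton i)).inter (hJ2 (measurableSet_singleton i)).compl
  have hdiff : (∫ u in Set.Ioo (0 : ℝ) 1,
      Set.indicator {u : ℝ | SC.J hk0 x y u ≠ SC.J hk0 y x u}
        (fun _ => (1 : ℝ)) u) ≤ (∑ i, |x i - y i|) / 2 := by
    rw [setIntegral_indicator hDmeas, setIntegral_const, measureReal_def, smul_eq_mul, mul_one]
    have hsub := SC.J_ne_subset hk0 x y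
    have hle : volume (Set.Ioo (0:ℝ) 1 ∩ {u | SC.J hk0 x y u ≠ SC.J hk0 y x u}) ≤
        ENNReal.ofReal (1 - ∑ j, min (x j) (y j)) := by
      calc volume (Set.Ioo (0:ℝ) 1 ∩ {u | SC.J hk0 x y u ≠ SC.J hk0 y x u})
          ≤ volume (Set.Ico (∑ i, min (x i) (y i)) 1) := measure_mono hsub
        _ = ENNReal.ofReal (1 - ∑ j, min (x j) (y j)) := Real.volume_Ico
    have := ENNReal.toReal_mono ENNReal.ofReal_ne_top hle
    rw [ENNReal.toReal_ofReal (by linarith)] at this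
    rw [habs]
    linarith
  refine ⟨fun u _ => ⟨⟨SC.J hk0 x y u, rfl⟩, ⟨SC.J hk0 y x u, rfl⟩⟩,
    law x y hx hy hJ1, ?_, ?_, ?_⟩
  · intro i
    exact law y x hy hx hJ2 i
  · rw [hDset]; exact hdiff
  · -- pointwise identity with 2 * indicator
    have hpt : (fun u => ∑ i, |(Pi.single (SC.J hk0 x y u) 1 : Fin k → ℝ) i -
        (Pi.single (SC.J hk0 y x u) 1 : Fin k → ℝ) i|) =
        fun u => 2 * Set.indicator {u : ℝ | SC.J hk0 x y u ≠ SC.J hk0 y x u}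
          (fun _ => (1 : ℝ)) u := by
      funext u
      by_cases h : SC.J hk0 x y u = SC.J hk0 y x u
      · rw [Set.indicator_of_notMem (by simpa using h), h]
        simp
      · rw [Set.indicator_of_mem (by simpa using h)]
        have hterm : ∀ i : Fin k, |(Pi.single (SC.J hk0 x y u) 1 : Fin k → ℝ) i -
            (Pi.single (SC.J hk0 y x u) 1 : Fin k → ℝ) i| =
            (Pi.single (SC.J hk0 x y u) 1 : Fin k → ℝ) i +
            (Pi.single (SC.J hk0 y x u) 1 : Fin k → ℝ) i := by
          intro i
          rcases eq_or_ne i (SC.J hk0 x y u) with rfl | hia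
          · rw [Pi.single_eq_same, Pi.single_eq_of_ne h]
            norm_num
          · rw [Pi.single_eq_of_ne hia]
            rcases eq_or_ne i (SC.J hk0 y x u) with rfl | hib
            · rw [Pi.single_eq_same]; norm_num
            · rw [Pi.single_eq_of_ne hib]; norm_num
        rw [Finset.sum_congr rfl fun i _ => hterm i, Finset.sum_add_distrib]
        have hsum : ∀ a : Fin k, (∑ i : Fin k, (Pi.single a 1 : Fin k → ℝ) i) = 1 := by
          intro a
          rw [Finset.sum_eq_single_of_mem a (Finset.mem_univ a)
            (fun b _ hb => Pi.single_eq_of_ne hb _), Pi.single_eq_same]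
        rw [hsum, hsum]; norm_num
    rw [hpt, integral_const_mul]
    have := hdiff
    linarith
end

section
/- Let β ∈ (0,1), α > 0, b₀ ∈ [0,∞)^k with |b₀| > 0, r = α/(1−β), r* = |b₀| + r, p₀ = b₀/|b₀| and γ = β + α/r* ∈ (β,1). Let S = {x ∈ ℝ^k : xᵢ ∈ [b₀ᵢ/r*, (b₀ᵢ+r)/r*], |x| = 1} with the ℓ¹ metric, and let P be the Markov kernel on S given by (Pf)(x) = Σ_{i=1}^k xᵢ f((βx + (1−γ)p₀)_{(i)}), where z_{(i)} denotes z with (γ−β) added to its i-th coordinate. Then P maps Lipschitz functions to Lipschitz functions with |Pf|_Lip ≤ γ |f|_Lip for every Lipschitz f on S; that is, P is a semi-contraction on Lip(S) with constant γ < 1. -/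
/-- **Semi-contraction of the predictive-mean kernel, `β ∈ (0,1)`**: the kernel
`(Pf)(x) = ∑ᵢ xᵢ f((βx + (1−γ)p₀)_{(i)})` on
`S = {x : xᵢ ∈ [b₀ᵢ/r*, (b₀ᵢ+r)/r*], |x| = 1}` satisfies `|Pf|_Lip ≤ γ |f|_Lip`
for the `ℓ¹` metric: if `f` is `K`-Lipschitz on `S` then `Pf` is `γK`-Lipschitz on `S`. -/
theorem rp_urn_kernel_semicontraction
    (k : ℕ) (hk : 2 ≤ k)
    (α β : ℝ) (hα : 0 < α) (hβ0 : 0 < β) (hβ1 : β < 1)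
    (b₀ : Fin k → ℝ) (hb₀nn : ∀ i, 0 ≤ b₀ i) (hb₀pos : 0 < ∑ i, b₀ i)
    (r rs : ℝ) (hr : r = α / (1 - β)) (hrs : rs = (∑ i, b₀ i) + r)
    (p₀ : Fin k → ℝ) (hp₀ : ∀ i, p₀ i = b₀ i / ∑ j, b₀ j)
    (γ : ℝ) (hγ : γ = β + α / rs)
    (S : Set (Fin k → ℝ))
    (hS : S = {x | (∀ i, b₀ i / rs ≤ x i ∧ x i ≤ (b₀ i + r) / rs) ∧ ∑ i, x i = 1})
    (Pop : ((Fin k → ℝ) → ℝ) → ((Fin k → ℝ) → ℝ))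
    (hPop : ∀ f x, Pop f x
        = ∑ i, x i * f (fun j => β * x j + (1 - γ) * p₀ j + if j = i then γ - β else 0)) :
    ∀ (f : (Fin k → ℝ) → ℝ) (K : ℝ), 0 ≤ K →
      (∀ x ∈ S, ∀ y ∈ S, |f y - f x| ≤ K * ∑ i, |y i - x i|) →
      (∀ x ∈ S, ∀ y ∈ S, |Pop f y - Pop f x| ≤ γ * K * ∑ i, |y i - x i|) := by
  intro f K hK hf x hx y hy
  have h1β : 0 < 1 - β := by linarith
  have hrpos : 0 < r := by rw [hr]; positivity
  have hBpos : 0 < ∑ i, b₀ i := hb₀pos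
  have hrspos : 0 < rs := by rw [hrs]; linarith
  have hα' : α = r * (1 - β) := by rw [hr]; field_simp
  have hγβ : γ - β = (1 - β) * r / rs := by
    rw [hγ, hα']; ring
  have hγβ0 : 0 ≤ γ - β := by rw [hγβ]; positivity
  have key : ∀ j, (1 - γ) * p₀ j = (1 - β) * b₀ j / rs := by
    intro j
    rw [hγ, hα', hp₀ j]
    rw [hrs]
    field_simp
    ring
  -- the maps T i
  set T : Fin k → (Fin k → ℝ) → Fin k → ℝ :=
    fun i z j => β * z j + (1 - γ) * p₀ j + if j = i then γ - β else 0 with hT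
  have hPop' : ∀ z, Pop f z = ∑ i, z i * f (T i z) := fun z => hPop f z
  -- membership of S
  have hmem : ∀ z ∈ S, ∀ i, T i z ∈ S := by
    intro z hz i
    rw [hS] at hz ⊢
    obtain ⟨hzb, hzs⟩ := hz
    constructor
    · intro j
      have h1 := (hzb j).1
      have h2 := (hzb j).2
      have hite0 : (0:ℝ) ≤ (if j = i then γ - β else 0) := by positivity
      have hite1 : (if j = i then γ - β else 0) ≤ γ - β := by
        split <;> simp [hγβ0]
      constructor
      · have : b₀ j / rs ≤ β * z j + (1 - β) * b₀ j / rs := by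
          have : β * (b₀ j / rs) ≤ β * z j := by
            apply mul_le_mul_of_nonneg_left h1 (le_of_lt hβ0)
          have hid : b₀ j / rs = β * (b₀ j / rs) + (1 - β) * b₀ j / rs := by ring
          linarith
        simp only [hT, key j]
        linarith
      · have hb : β * z j ≤ β * ((b₀ j + r) / rs) :=
          mul_le_mul_of_nonneg_left h2 (le_of_lt hβ0)
        have hid : β * ((b₀ j + r) / rs) + (1 - β) * b₀ j / rs + (1 - β) * r / rs
            = (b₀ j + r) / rs := by ring
        simp only [hT, key j]
        linarith [hγβ]
    · simp only [hT]
      rw [Finset.sum_add_distrib, Finset.sum_add_distrib]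
      rw [Finset.sum_ite_eq' Finset.univ i (fun _ => γ - β)]
      simp only [Finset.mem_univ, if_true]
      rw [← Finset.mul_sum, hzs]
      have hsp : ∑ j, (1 - γ) * p₀ j = (1 - β) * (∑ i, b₀ i) / rs := by
        calc ∑ j, (1 - γ) * p₀ j = ∑ j, (1 - β) * b₀ j / rs := by
              exact Finset.sum_congr rfl (fun j _ => key j)
          _ = (1 - β) * (∑ i, b₀ i) / rs := by
              simp [Finset.mul_sum, Finset.sum_div]
      rw [hsp, hγβ]
      have h : (1 - β) * (∑ i, b₀ i) / rs + (1 - β) * r / rs = 1 - β := by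
        rw [← add_div, ← left_distrib, ← hrs, mul_div_assoc,
          div_self (ne_of_gt hrspos), mul_one]
      linarith
  -- basic facts about x, y
  have hxS := hx; have hyS := hy
  rw [hS] at hxS hyS
  obtain ⟨hxb, hxsum⟩ := hxS
  obtain ⟨hyb, hysum⟩ := hyS
  have hynn : ∀ i, 0 ≤ y i := by
    intro i
    have := (hyb i).1
    have : 0 ≤ b₀ i / rs := div_nonneg (hb₀nn i) (le_of_lt hrspos)
    linarith [(hyb i).1]
  -- distance between T i y and T i x
  have hdist : ∀ i, ∑ j, |T i y j - T i x j| = β * ∑ j, |y j - x j| := by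
    intro i
    rw [Finset.mul_sum]
    apply Finset.sum_congr rfl
    intro j _
    have : T i y j - T i x j = β * (y j - x j) := by simp only [hT]; ring
    rw [this, abs_mul, abs_of_pos hβ0]
  -- pairwise distance between T i x and T i' x
  have hpair : ∀ i i', ∑ j, |T i x j - T i' x j| ≤ 2 * (γ - β) := by
    intro i i'
    have h1 : ∀ j, |T i x j - T i' x j|
        ≤ |if j = i then γ - β else 0| + |if j = i' then γ - β else 0| := by
      intro j
      have : T i x j - T i' x j
          = (if j = i then γ - β else 0) - (if j = i' then γ - β else 0) := by
        simp only [hT]; ring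
      rw [this]
      exact abs_sub _ _
    calc ∑ j, |T i x j - T i' x j|
        ≤ ∑ j, (|if j = i then γ - β else 0| + |if j = i' then γ - β else 0|) :=
          Finset.sum_le_sum (fun j _ => h1 j)
      _ = (γ - β) + (γ - β) := by
          have habs : ∀ (i₀ j : Fin k),
              |if j = i₀ then γ - β else 0| = if j = i₀ then γ - β else 0 := by
            intro i₀ j; split
            · exact abs_of_nonneg hγβ0
            · exact abs_zero
          rw [Finset.sum_add_distrib]
          congr 1
          · simp only [habs]
            rw [Finset.sum_ite_eq' Finset.univ i (fun _ => γ - β)]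
            simp
          · simp only [habs]
            rw [Finset.sum_ite_eq' Finset.univ i' (fun _ => γ - β)]
            simp
      _ = 2 * (γ - β) := by ring
  set g : Fin k → ℝ := fun i => f (T i x) with hg
  set F : Fin k → ℝ := fun i => f (T i y) with hF
  have hne : (Finset.univ : Finset (Fin k)).Nonempty := by
    have hk0 : 0 < k := by omega
    exact Finset.univ_nonempty_iff.mpr (Fin.pos_iff_nonempty.mp hk0)
  set M := Finset.univ.sup' hne g with hM
  set m := Finset.univ.inf' hne g with hm
  have hMm : M - m ≤ 2 * (γ - β) * K := by
    obtain ⟨i₁, _, hi₁⟩ := Finset.exists_mem_eq_sup' hne g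
    obtain ⟨i₂, _, hi₂⟩ := Finset.exists_mem_eq_inf' hne g
    have hle := hf (T i₂ x) (hmem x hx i₂) (T i₁ x) (hmem x hx i₁)
    have : M - m = g i₁ - g i₂ := by rw [hM, hm, hi₁, hi₂]
    rw [this]
    calc g i₁ - g i₂ ≤ |f (T i₁ x) - f (T i₂ x)| := le_abs_self _
      _ ≤ K * ∑ j, |T i₁ x j - T i₂ x j| := hle
      _ ≤ K * (2 * (γ - β)) := mul_le_mul_of_nonneg_left (hpair i₁ i₂) hK
      _ = 2 * (γ - β) * K := by ring
  set c : ℝ := (M + m) / 2 with hc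
  have hgc : ∀ i, |g i - c| ≤ (γ - β) * K := by
    intro i
    have h1 : g i ≤ M := Finset.le_sup' g (Finset.mem_univ i)
    have h2 : m ≤ g i := Finset.inf'_le g (Finset.mem_univ i)
    rw [abs_le]
    constructor <;> [skip; skip] <;> rw [hc] <;> linarith
  -- decomposition
  have hdecomp : Pop f y - Pop f x
      = (∑ i, y i * (F i - g i)) + ∑ i, (y i - x i) * (g i - c) := by
    rw [hPop' x, hPop' y]
    have hzero : ∑ i, (y i - x i) = 0 := by
      rw [Finset.sum_sub_distrib, hxsum, hysum]; ring
    have : ∑ i, (y i - x i) * (g i - c)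
        = ∑ i, ((y i - x i) * g i) - c * ∑ i, (y i - x i) := by
      rw [Finset.mul_sum, ← Finset.sum_sub_distrib]
      exact Finset.sum_congr rfl (fun i _ => by ring)
    rw [this, hzero, mul_zero, sub_zero, ← Finset.sum_add_distrib,
      ← Finset.sum_sub_distrib]
    exact Finset.sum_congr rfl (fun i _ => by ring)
  rw [hdecomp]
  have hfirst : |∑ i, y i * (F i - g i)| ≤ β * K * ∑ j, |y j - x j| := by
    calc |∑ i, y i * (F i - g i)| ≤ ∑ i, |y i * (F i - g i)| :=
          Finset.abs_sum_le_sum_abs _ _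
      _ ≤ ∑ i, y i * (K * (β * ∑ j, |y j - x j|)) := by
          apply Finset.sum_le_sum
          intro i _
          rw [abs_mul, abs_of_nonneg (hynn i)]
          apply mul_le_mul_of_nonneg_left _ (hynn i)
          calc |F i - g i| ≤ K * ∑ j, |T i y j - T i x j| :=
                hf (T i x) (hmem x hx i) (T i y) (hmem y hy i)
            _ = K * (β * ∑ j, |y j - x j|) := by rw [hdist i]
      _ = β * K * ∑ j, |y j - x j| := by
          rw [← Finset.sum_mul, hysum]; ring
  have hsecond : |∑ i, (y i - x i) * (g i - c)| ≤ (γ - β) * K * ∑ j, |y j - x j| := by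
    calc |∑ i, (y i - x i) * (g i - c)| ≤ ∑ i, |(y i - x i) * (g i - c)| :=
          Finset.abs_sum_le_sum_abs _ _
      _ ≤ ∑ i, |y i - x i| * ((γ - β) * K) := by
          apply Finset.sum_le_sum
          intro i _
          rw [abs_mul]
          exact mul_le_mul_of_nonneg_left (hgc i) (abs_nonneg _)
      _ = (γ - β) * K * ∑ j, |y j - x j| := by
          rw [← Finset.sum_mul]; ring
  calc |(∑ i, y i * (F i - g i)) + ∑ i, (y i - x i) * (g i - c)|
      ≤ |∑ i, y i * (F i - g i)| + |∑ i, (y i - x i) * (g i - c)| := abs_add_le _ _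
    _ ≤ β * K * ∑ j, |y j - x j| + (γ - β) * K * ∑ j, |y j - x j| := by
        linarith
    _ = γ * K * ∑ i, |y i - x i| := by ring
end

section
/- Let β ∈ (0,1), α > 0, b₀ ∈ [0,∞)^k with |b₀| > 0, r = α/(1−β), r* = |b₀| + r, p₀ = b₀/|b₀|, γ = β + α/r*, and let P be the Markov kernel on S = {x ∈ ℝ^k : xᵢ ∈ [b₀ᵢ/r*, (b₀ᵢ+r)/r*], |x| = 1} given by (Pf)(x) = Σ_{i=1}^k xᵢ f((βx + (1−γ)p₀)_{(i)}), where z_{(i)} denotes z with (γ−β) added to its i-th coordinate. Let π be an invariant probability measure of P. Then, for every initial distribution ν on S, the Markov chain (ψ_n) with kernel P and ψ₀ ~ ν converges in distribution to π; in particular π is the unique invariant probability measure of P. -/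
open MeasureTheory Filter

open Finset

/-- Core contraction estimate for the rescaled-Pólya-urn kernel. -/
lemma rp_lip_step {k : ℕ} {β c : ℝ} (hβ : 0 ≤ β) (hc : 0 ≤ c)
    {T : Fin k → (Fin k → ℝ) → (Fin k → ℝ)} {S : Set (Fin k → ℝ)}
    (hT : ∀ i x, x ∈ S → T i x ∈ S)
    (hT1 : ∀ i x y, x ∈ S → y ∈ S → ∑ j, |T i x j - T i y j| ≤ β * ∑ j, |x j - y j|)
    (hT2 : ∀ i i' y, y ∈ S → ∑ j, |T i y j - T i' y j| ≤ 2 * c)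
    (hSnn : ∀ x ∈ S, ∀ i, 0 ≤ x i) (hSsum : ∀ x ∈ S, ∑ i, x i = 1)
    {g : (Fin k → ℝ) → ℝ} {L : ℝ} (hL : 0 ≤ L)
    (hg : ∀ x ∈ S, ∀ y ∈ S, |g x - g y| ≤ L * ∑ j, |x j - y j|)
    {x y : Fin k → ℝ} (hx : x ∈ S) (hy : y ∈ S) :
    |(∑ i, x i * g (T i x)) - ∑ i, y i * g (T i y)|
      ≤ (β + c) * L * ∑ j, |x j - y j| := by
  classical
  set m : Fin k → ℝ := fun i => min (x i) (y i) with hm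
  set a : Fin k → ℝ := fun i => x i - m i with ha'
  set b : Fin k → ℝ := fun i => y i - m i with hb'
  have ha : ∀ i, 0 ≤ a i := fun i => sub_nonneg.2 (min_le_left _ _)
  have hb : ∀ i, 0 ≤ b i := fun i => sub_nonneg.2 (min_le_right _ _)
  have hab : ∀ i, x i - y i = a i - b i := by
    intro i; show x i - y i = (x i - m i) - (y i - m i); ring
  have habs : ∀ i, |x i - y i| = a i + b i := by
    intro i
    rcases le_total (x i) (y i) with h | h
    · have hmi : m i = x i := min_eq_left h
      rw [abs_sub_comm, abs_of_nonneg (by linarith : (0:ℝ) ≤ y i - x i)]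
      show y i - x i = (x i - m i) + (y i - m i)
      rw [hmi]; ring
    · have hmi : m i = y i := min_eq_right h
      rw [abs_of_nonneg (by linarith : (0:ℝ) ≤ x i - y i)]
      show x i - y i = (x i - m i) + (y i - m i)
      rw [hmi]; ring
  set d : ℝ := ∑ i, a i with hd'
  have hsumab : ∑ i, b i = d := by
    have h1 : ∑ i, (a i - b i) = 0 := by
      have : ∑ i, (a i - b i) = ∑ i, (x i - y i) := by
        refine Finset.sum_congr rfl fun i _ => (hab i).symm
      rw [this, Finset.sum_sub_distrib, hSsum x hx, hSsum y hy, sub_self]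
    rw [Finset.sum_sub_distrib] at h1
    rw [hd']; linarith
  have hd0 : 0 ≤ d := Finset.sum_nonneg fun i _ => ha i
  have h2d : ∑ j, |x j - y j| = 2 * d := by
    rw [show ∑ j, |x j - y j| = ∑ j, (a j + b j) from Finset.sum_congr rfl fun j _ => habs j,
      Finset.sum_add_distrib, hsumab, hd']
    ring
  -- decomposition
  have key : (∑ i, x i * g (T i x)) - ∑ i, y i * g (T i y)
      = (∑ i, x i * (g (T i x) - g (T i y)))
        + ((∑ i, a i * g (T i y)) - ∑ i, b i * g (T i y)) := by
    have h1 : ∀ i, x i * g (T i x) - y i * g (T i y)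
        = x i * (g (T i x) - g (T i y)) + (a i * g (T i y) - b i * g (T i y)) := fun i => by
      linear_combination g (T i y) * (hab i)
    calc (∑ i, x i * g (T i x)) - ∑ i, y i * g (T i y)
        = ∑ i, (x i * g (T i x) - y i * g (T i y)) := (Finset.sum_sub_distrib _ _).symm
      _ = ∑ i, (x i * (g (T i x) - g (T i y)) + (a i * g (T i y) - b i * g (T i y))) :=
          Finset.sum_congr rfl fun i _ => h1 i
      _ = _ := by rw [Finset.sum_add_distrib, Finset.sum_sub_distrib]
  -- term 1
  have t1 : |∑ i, x i * (g (T i x) - g (T i y))| ≤ β * L * (2 * d) := by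
    calc |∑ i, x i * (g (T i x) - g (T i y))| ≤ ∑ i, |x i * (g (T i x) - g (T i y))| :=
          Finset.abs_sum_le_sum_abs _ _
      _ ≤ ∑ i, x i * (β * L * (2 * d)) := by
          refine Finset.sum_le_sum fun i _ => ?_
          rw [abs_mul, abs_of_nonneg (hSnn x hx i)]
          refine mul_le_mul_of_nonneg_left ?_ (hSnn x hx i)
          calc |g (T i x) - g (T i y)| ≤ L * ∑ j, |T i x j - T i y j| :=
                hg _ (hT i x hx) _ (hT i y hy)
            _ ≤ L * (β * ∑ j, |x j - y j|) :=
                mul_le_mul_of_nonneg_left (hT1 i x y hx hy) hL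
            _ = β * L * (2 * d) := by rw [h2d]; ring
      _ = β * L * (2 * d) := by
          rw [← Finset.sum_mul, hSsum x hx, one_mul]
  -- term 2
  have hosc : ∀ i i', |g (T i y) - g (T i' y)| ≤ L * (2 * c) := fun i i' =>
    le_trans (hg _ (hT i y hy) _ (hT i' y hy))
      (mul_le_mul_of_nonneg_left (hT2 i i' y hy) hL)
  have t2 : |(∑ i, a i * g (T i y)) - ∑ i, b i * g (T i y)| ≤ 2 * c * L * d := by
    rcases eq_or_lt_of_le hd0 with hd | hd
    · have haz : ∀ i ∈ Finset.univ, a i = 0 :=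
        (Finset.sum_eq_zero_iff_of_nonneg (fun i _ => ha i)).1 hd.symm
      have hbz : ∀ i ∈ Finset.univ, b i = 0 :=
        (Finset.sum_eq_zero_iff_of_nonneg (fun i _ => hb i)).1 (by rw [hsumab, ← hd])
      have : (∑ i, a i * g (T i y)) = 0 := Finset.sum_eq_zero fun i hi => by
        rw [haz i hi, zero_mul]
      have h2 : (∑ i, b i * g (T i y)) = 0 := Finset.sum_eq_zero fun i hi => by
        rw [hbz i hi, zero_mul]
      rw [this, h2, sub_zero, abs_zero]
      positivity
    · have hdd : d * ((∑ i, a i * g (T i y)) - ∑ i, b i * g (T i y))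
          = ∑ i, ∑ j, a i * b j * (g (T i y) - g (T j y)) := by
        rw [mul_sub]
        rw [show d * ∑ i, a i * g (T i y) = (∑ i, a i * g (T i y)) * ∑ j, b j by
          rw [hsumab]; ring]
        rw [show d * ∑ i, b i * g (T i y) = (∑ i, a i) * ∑ j, b j * g (T j y) by
          rw [hd']]
        rw [Finset.sum_mul_sum, Finset.sum_mul_sum, ← Finset.sum_sub_distrib]
        refine Finset.sum_congr rfl fun i _ => ?_
        rw [← Finset.sum_sub_distrib]
        refine Finset.sum_congr rfl fun j _ => ?_
        ring
      have hbound : |d * ((∑ i, a i * g (T i y)) - ∑ i, b i * g (T i y))|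
          ≤ L * (2 * c) * (d * d) := by
        rw [hdd]
        calc |∑ i, ∑ j, a i * b j * (g (T i y) - g (T j y))|
            ≤ ∑ i, |∑ j, a i * b j * (g (T i y) - g (T j y))| := Finset.abs_sum_le_sum_abs _ _
          _ ≤ ∑ i, ∑ j, |a i * b j * (g (T i y) - g (T j y))| :=
              Finset.sum_le_sum fun i _ => Finset.abs_sum_le_sum_abs _ _
          _ ≤ ∑ i, ∑ j, a i * b j * (L * (2 * c)) := by
              refine Finset.sum_le_sum fun i _ => Finset.sum_le_sum fun j _ => ?_
              rw [abs_mul, abs_mul, abs_of_nonneg (ha i), abs_of_nonneg (hb j)]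
              exact mul_le_mul_of_nonneg_left (hosc i j)
                (mul_nonneg (ha i) (hb j))
          _ = ∑ i, a i * ((∑ j, b j) * (L * (2 * c))) := by
              refine Finset.sum_congr rfl fun i _ => ?_
              rw [Finset.sum_mul, Finset.mul_sum]
              exact Finset.sum_congr rfl fun j _ => mul_assoc _ _ _
          _ = (∑ i, a i) * ((∑ j, b j) * (L * (2 * c))) := by rw [← Finset.sum_mul]
          _ = L * (2 * c) * (d * d) := by rw [hsumab, ← hd']; ring
      rw [abs_mul, abs_of_pos hd] at hbound
      nlinarith [hbound]
  calc |(∑ i, x i * g (T i x)) - ∑ i, y i * g (T i y)|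
      ≤ |∑ i, x i * (g (T i x) - g (T i y))|
        + |(∑ i, a i * g (T i y)) - ∑ i, b i * g (T i y)| := by
        rw [key]; exact abs_add_le _ _
    _ ≤ β * L * (2 * d) + 2 * c * L * d := add_le_add t1 t2
    _ = (β + c) * L * ∑ j, |x j - y j| := by rw [h2d]; ring

open MeasureTheory Filter Finset

/-- The one-step deterministic maps of the rescaled Pólya urn predictive-mean chain. -/
def rpT {k : ℕ} (β γ : ℝ) (p₀ : Fin k → ℝ) (i : Fin k) (x : Fin k → ℝ) : Fin k → ℝ :=
  fun j => β * x j + (1 - γ) * p₀ j + if j = i then γ - β else 0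

/-- The transition operator, cut off outside `S` to keep it bounded. -/
noncomputable def rpQ {k : ℕ} (β γ : ℝ) (p₀ : Fin k → ℝ) (S : Set (Fin k → ℝ))
    (g : (Fin k → ℝ) → ℝ) : (Fin k → ℝ) → ℝ :=
  S.indicator fun x => ∑ i, x i * g (rpT β γ p₀ i x)

/-- Lipschitz property (w.r.t. the `ℓ¹` distance) on the set `S`. -/
def rpLipOn {k : ℕ} (S : Set (Fin k → ℝ)) (L : ℝ) (g : (Fin k → ℝ) → ℝ) : Prop :=
  ∀ x ∈ S, ∀ y ∈ S, |g x - g y| ≤ L * ∑ j, |x j - y j|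

lemma rpQ_measurable {k : ℕ} {β γ : ℝ} {p₀ : Fin k → ℝ} {S : Set (Fin k → ℝ)}
    (hS : MeasurableSet S) {g : (Fin k → ℝ) → ℝ} (hg : Measurable g) :
    Measurable (rpQ β γ p₀ S g) := by
  refine Measurable.indicator ?_ hS
  refine Finset.univ.measurable_sum fun i _ => ?_
  refine (measurable_pi_apply i).mul (hg.comp ?_)
  refine measurable_pi_lambda _ fun j => ?_
  have h1 : Measurable fun x : Fin k → ℝ => β * x j := measurable_const.mul (measurable_pi_apply j)
  have h2 : Measurable fun x : Fin k → ℝ => β * x j + (1 - γ) * p₀ j := h1.add_const _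
  exact h2.add_const _

lemma rpQ_bound {k : ℕ} {β γ : ℝ} {p₀ : Fin k → ℝ} {S : Set (Fin k → ℝ)}
    (hSnn : ∀ x ∈ S, ∀ i, 0 ≤ x i) (hSsum : ∀ x ∈ S, ∑ i, x i = 1)
    {g : (Fin k → ℝ) → ℝ} {C : ℝ} (hC0 : 0 ≤ C) (hg : ∀ x, |g x| ≤ C) :
    ∀ x, |rpQ β γ p₀ S g x| ≤ C := by
  intro x
  by_cases hx : x ∈ S
  · rw [rpQ, Set.indicator_of_mem hx]
    calc |∑ i, x i * g (rpT β γ p₀ i x)| ≤ ∑ i, |x i * g (rpT β γ p₀ i x)| :=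
        Finset.abs_sum_le_sum_abs _ _
      _ ≤ ∑ i, x i * C := Finset.sum_le_sum fun i _ => by
          rw [abs_mul, abs_of_nonneg (hSnn x hx i)]
          exact mul_le_mul_of_nonneg_left (hg _) (hSnn x hx i)
      _ = C := by rw [← Finset.sum_mul, hSsum x hx, one_mul]
  · rw [rpQ, Set.indicator_of_notMem hx, abs_zero]; exact hC0

lemma rpQ_agree {k : ℕ} {β γ : ℝ} {p₀ : Fin k → ℝ} {S : Set (Fin k → ℝ)}
    {g : (Fin k → ℝ) → ℝ} {x : Fin k → ℝ} (hx : x ∈ S) :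
    rpQ β γ p₀ S g x = ∑ i, x i * g (rpT β γ p₀ i x) := Set.indicator_of_mem hx _

lemma rpQ_lip {k : ℕ} {β γ : ℝ} {p₀ : Fin k → ℝ} {S : Set (Fin k → ℝ)}
    (hβ : 0 ≤ β) (hγβ : 0 ≤ γ - β)
    (hT : ∀ (i : Fin k), ∀ x ∈ S, rpT β γ p₀ i x ∈ S)
    (hSnn : ∀ x ∈ S, ∀ i, 0 ≤ x i) (hSsum : ∀ x ∈ S, ∑ i, x i = 1)
    {g : (Fin k → ℝ) → ℝ} {L : ℝ} (hL : 0 ≤ L) (hg : rpLipOn S L g) :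
    rpLipOn S (γ * L) (rpQ β γ p₀ S g) := by
  intro x hx y hy
  rw [rpQ_agree hx, rpQ_agree hy]
  have hT1 : ∀ (i : Fin k) (x y : Fin k → ℝ), x ∈ S → y ∈ S →
      ∑ j, |rpT β γ p₀ i x j - rpT β γ p₀ i y j| ≤ β * ∑ j, |x j - y j| := by
    intro i x y _ _
    refine le_of_eq ?_
    rw [Finset.mul_sum]
    refine Finset.sum_congr rfl fun j _ => ?_
    have : rpT β γ p₀ i x j - rpT β γ p₀ i y j = β * (x j - y j) := by
      simp only [rpT]; ring
    rw [this, abs_mul, abs_of_nonneg hβ]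
  have hT2 : ∀ (i i' : Fin k), ∀ y ∈ S,
      ∑ j, |rpT β γ p₀ i y j - rpT β γ p₀ i' y j| ≤ 2 * (γ - β) := by
    intro i i' y _
    have hterm : ∀ j, |rpT β γ p₀ i y j - rpT β γ p₀ i' y j|
        ≤ (if j = i then γ - β else 0) + (if j = i' then γ - β else 0) := by
      intro j
      have : rpT β γ p₀ i y j - rpT β γ p₀ i' y j
          = (if j = i then γ - β else 0) - (if j = i' then γ - β else 0) := by
        simp only [rpT]; ring
      rw [this]
      refine le_trans (abs_sub _ _) ?_
      gcongr <;> · split <;> simp [abs_of_nonneg hγβ, le_refl]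
    calc ∑ j, |rpT β γ p₀ i y j - rpT β γ p₀ i' y j|
        ≤ ∑ j, ((if j = i then γ - β else 0) + (if j = i' then γ - β else 0)) :=
          Finset.sum_le_sum fun j _ => hterm j
      _ = 2 * (γ - β) := by
          rw [Finset.sum_add_distrib, Finset.sum_ite_eq' Finset.univ i fun _ => γ - β,
            Finset.sum_ite_eq' Finset.univ i' fun _ => γ - β]
          simp; ring
  have := rp_lip_step hβ hγβ hT hT1 hT2 hSnn hSsum hL hg hx hy
  calc |(∑ i, x i * g (rpT β γ p₀ i x)) - ∑ i, y i * g (rpT β γ p₀ i y)|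
      ≤ (β + (γ - β)) * L * ∑ j, |x j - y j| := this
    _ = γ * L * ∑ j, |x j - y j| := by ring

lemma rpQ_iter_lip {k : ℕ} {β γ : ℝ} {p₀ : Fin k → ℝ} {S : Set (Fin k → ℝ)}
    (hβ : 0 ≤ β) (hγβ : 0 ≤ γ - β)
    (hT : ∀ (i : Fin k), ∀ x ∈ S, rpT β γ p₀ i x ∈ S)
    (hSnn : ∀ x ∈ S, ∀ i, 0 ≤ x i) (hSsum : ∀ x ∈ S, ∑ i, x i = 1)
    {g : (Fin k → ℝ) → ℝ} {L : ℝ} (hL : 0 ≤ L) (hg : rpLipOn S L g) (n : ℕ) :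
    rpLipOn S (γ ^ n * L) ((rpQ β γ p₀ S)^[n] g) := by
  induction n with
  | zero => simpa using hg
  | succ n ih =>
      rw [Function.iterate_succ_apply']
      have h := rpQ_lip hβ hγβ hT hSnn hSsum
        (mul_nonneg (pow_nonneg (by linarith) n) hL) ih
      have : γ * (γ ^ n * L) = γ ^ (n + 1) * L := by ring
      rwa [this] at h

lemma rpQ_iter_bound {k : ℕ} {β γ : ℝ} {p₀ : Fin k → ℝ} {S : Set (Fin k → ℝ)}
    (hSnn : ∀ x ∈ S, ∀ i, 0 ≤ x i) (hSsum : ∀ x ∈ S, ∑ i, x i = 1)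
    {g : (Fin k → ℝ) → ℝ} {C : ℝ} (hC0 : 0 ≤ C) (hg : ∀ x, |g x| ≤ C) (n : ℕ) :
    ∀ x, |(rpQ β γ p₀ S)^[n] g x| ≤ C := by
  induction n with
  | zero => simpa using hg
  | succ n ih =>
      rw [Function.iterate_succ_apply']
      exact rpQ_bound hSnn hSsum hC0 ih

lemma rpQ_iter_measurable {k : ℕ} {β γ : ℝ} {p₀ : Fin k → ℝ} {S : Set (Fin k → ℝ)}
    (hS : MeasurableSet S) {g : (Fin k → ℝ) → ℝ} (hg : Measurable g) (n : ℕ) :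
    Measurable ((rpQ β γ p₀ S)^[n] g) := by
  induction n with
  | zero => simpa using hg
  | succ n ih =>
      rw [Function.iterate_succ_apply']
      exact rpQ_measurable hS ih

lemma rp_integrable_of_bdd {X : Type*} [MeasurableSpace X] {ρ : Measure X} [IsFiniteMeasure ρ]
    {h : X → ℝ} (hm : Measurable h) {C : ℝ} (hb : ∀ x, |h x| ≤ C) : Integrable h ρ :=
  Integrable.mono' (integrable_const C) hm.aestronglyMeasurable
    (Filter.Eventually.of_forall fun x => by simpa [Real.norm_eq_abs] using hb x)

lemma rp_abs_sub_integral_le {X : Type*} [MeasurableSpace X] {ρ : Measure X}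
    [IsProbabilityMeasure ρ] {h : X → ℝ} (hm : Integrable h ρ) {M c : ℝ}
    (hb : ∀ᵐ x ∂ρ, |c - h x| ≤ M) : |c - ∫ x, h x ∂ρ| ≤ M := by
  have heq : c - ∫ x, h x ∂ρ = ∫ x, (c - h x) ∂ρ := by
    rw [integral_sub (integrable_const c) hm, integral_const]
    simp
  rw [heq]
  have := norm_integral_le_of_norm_le_const (μ := ρ) (C := M) (f := fun x => c - h x)
    (by simpa [Real.norm_eq_abs] using hb)
  simpa [Real.norm_eq_abs, measure_univ] using this

section Approx



/-- Lipschitz approximation of a bounded continuous function, uniformly on a compact set,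
keeping the global bound. -/
lemma rp_lip_approx {k : ℕ} {S : Set (Fin k → ℝ)} (hScomp : IsCompact S) (hSne : S.Nonempty)
    {f : (Fin k → ℝ) → ℝ} (hf : Continuous f) {C : ℝ} (hC : ∀ x, |f x| ≤ C) {ε : ℝ}
    (hε : 0 < ε) :
    ∃ g : (Fin k → ℝ) → ℝ, ∃ L : ℝ, 0 ≤ L ∧ (∀ x y, |g x - g y| ≤ L * dist x y)
      ∧ (∀ x, |g x| ≤ C) ∧ (∀ x ∈ S, |g x - f x| ≤ ε) ∧ Continuous g := by
  have hC0 : 0 ≤ C := le_trans (abs_nonneg _) (hC fun _ => 0)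
  -- uniform continuity on S
  have hUC : UniformContinuousOn f S :=
    hScomp.uniformContinuousOn_of_continuous hf.continuousOn
  obtain ⟨δ, hδ0, hδ⟩ := (Metric.uniformContinuousOn_iff_le.1 hUC) ε hε
  set L : ℝ := (2 * C + 1) / δ with hL'
  have hL0 : 0 ≤ L := div_nonneg (by linarith) hδ0.le
  have : Nonempty S := hSne.to_subtype
  set g₀ : (Fin k → ℝ) → ℝ := fun yy => ⨅ z : S, (f z + L * dist yy z) with hg₀
  have B : ∀ yy : Fin k → ℝ, BddBelow (Set.range fun z : S => f z + L * dist yy (z : Fin k → ℝ)) := by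
    intro yy
    refine ⟨-C, ?_⟩
    rintro _ ⟨z, rfl⟩
    have h1 := hC z
    have h2 : 0 ≤ L * dist yy z := mul_nonneg hL0 dist_nonneg
    have := abs_le.1 h1
    dsimp only
    linarith [this.1]
  have glip1 : ∀ u v, g₀ u ≤ g₀ v + L * dist u v := by
    intro u v
    rw [← sub_le_iff_le_add]
    refine le_ciInf fun z => ?_
    rw [sub_le_iff_le_add]
    calc g₀ u ≤ f z + L * dist u z := ciInf_le (B u) z
      _ ≤ f z + L * (dist v z + dist u v) := by
          have := dist_triangle u v z
          have h2 : L * dist u z ≤ L * (dist u v + dist v z) :=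
            mul_le_mul_of_nonneg_left this hL0
          linarith
      _ = f z + L * dist v z + L * dist u v := by ring
  have glip : ∀ u v, |g₀ u - g₀ v| ≤ L * dist u v := by
    intro u v
    rw [abs_sub_le_iff]
    constructor
    · linarith [glip1 u v]
    · rw [dist_comm]; linarith [glip1 v u]
  have gle : ∀ x ∈ S, g₀ x ≤ f x := by
    intro x hx
    have := ciInf_le (B x) (⟨x, hx⟩ : S)
    simpa using this
  have gge : ∀ x ∈ S, f x - ε ≤ g₀ x := by
    intro x hx
    refine le_ciInf fun z => ?_
    rcases le_or_gt (dist x (z : Fin k → ℝ)) δ with h | h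
    · have := hδ x hx z z.2 h
      rw [Real.dist_eq, abs_le] at this
      have h2 : 0 ≤ L * dist x (z : Fin k → ℝ) := mul_nonneg hL0 dist_nonneg
      linarith [this.1]
    · have h2 : L * δ ≤ L * dist x (z : Fin k → ℝ) := mul_le_mul_of_nonneg_left h.le hL0
      have h3 : L * δ = 2 * C + 1 := by
        rw [hL']; field_simp
      have h4 := abs_le.1 (hC x)
      have h5 := abs_le.1 (hC z)
      linarith [h4.2, h5.1]
  refine ⟨fun yy => max (-C) (min C (g₀ yy)), L, hL0, ?_, ?_, ?_, ?_⟩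
  · intro u v
    calc |max (-C) (min C (g₀ u)) - max (-C) (min C (g₀ v))| ≤ |min C (g₀ u) - min C (g₀ v)| := by
          rw [max_comm (-C) _, max_comm (-C) _]
          exact abs_max_sub_max_le_abs _ _ _
      _ ≤ |g₀ u - g₀ v| := by
          rw [min_comm C _, min_comm C _]
          have := abs_min_sub_min_le_max (g₀ u) C (g₀ v) C
          simpa using this
      _ ≤ L * dist u v := glip u v
  · intro x
    rw [abs_le]
    constructor
    · exact le_max_left _ _
    · exact max_le (by linarith) (le_trans (min_le_left _ _) le_rfl)
  · intro x hx
    have h1 := gle x hx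
    have h2 := gge x hx
    have h4 := abs_le.1 (hC x)
    have hmin : min C (g₀ x) = g₀ x := min_eq_right (by linarith [h4.2])
    dsimp only
    rw [hmin]
    rcases le_or_gt (-C) (g₀ x) with h | h
    · rw [max_eq_right h, abs_le]; constructor <;> linarith
    · rw [max_eq_left h.le, abs_le]; constructor <;> linarith [h4.1]
  · have hg₀c : Continuous g₀ := by
      refine Metric.continuous_iff.2 fun x ε' hε' => ?_
      rcases eq_or_lt_of_le hL0 with hL | hL
      · refine ⟨1, one_pos, fun a _ => ?_⟩
        have := glip a x
        rw [← hL, zero_mul] at this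
        rw [Real.dist_eq]
        exact lt_of_le_of_lt this hε'
      · refine ⟨ε' / L, div_pos hε' hL, fun a ha => ?_⟩
        rw [Real.dist_eq]
        calc |g₀ a - g₀ x| ≤ L * dist a x := glip a x
          _ < L * (ε' / L) := by exact mul_lt_mul_of_pos_left ha hL
          _ = ε' := by field_simp
    exact continuous_const.max (continuous_const.min hg₀c)
end Approx

set_option maxHeartbeats 4000000

/-- **Ergodicity of the predictive-mean chain, `β ∈ (0,1)`**: for any initial distribution,
the Markov chain with kernel `(Pf)(x) = ∑ᵢ xᵢ f((βx + (1−γ)p₀)_{(i)})` on `S` converges in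
distribution to the invariant probability measure `π`; in particular `π` is the unique
invariant probability measure. -/
theorem rp_urn_kernel_ergodicity
    (k : ℕ) (hk : 2 ≤ k)
    (α β : ℝ) (hα : 0 < α) (hβ0 : 0 < β) (hβ1 : β < 1)
    (b₀ : Fin k → ℝ) (hb₀nn : ∀ i, 0 ≤ b₀ i) (hb₀pos : 0 < ∑ i, b₀ i)
    (r rs : ℝ) (hr : r = α / (1 - β)) (hrs : rs = (∑ i, b₀ i) + r)
    (p₀ : Fin k → ℝ) (hp₀ : ∀ i, p₀ i = b₀ i / ∑ j, b₀ j)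
    (γ : ℝ) (hγ : γ = β + α / rs)
    (S : Set (Fin k → ℝ))
    (hS : S = {x | (∀ i, b₀ i / rs ≤ x i ∧ x i ≤ (b₀ i + r) / rs) ∧ ∑ i, x i = 1})
    (Pop : ((Fin k → ℝ) → ℝ) → ((Fin k → ℝ) → ℝ))
    (hPop : ∀ f x, Pop f x
        = ∑ i, x i * f (fun j => β * x j + (1 - γ) * p₀ j + if j = i then γ - β else 0))
    (π : Measure (Fin k → ℝ)) (hπprob : IsProbabilityMeasure π) (hπS : π Sᶜ = 0)
    (hπinv : ∀ f : (Fin k → ℝ) → ℝ, Measurable f → (∃ C, ∀ x, |f x| ≤ C) →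
      ∫ x, Pop f x ∂π = ∫ x, f x ∂π) :
    (∀ {Ω : Type} {mΩ : MeasurableSpace Ω} (μ : Measure Ω), IsProbabilityMeasure μ →
      ∀ (ψ : ℕ → Ω → Fin k → ℝ) (ℱ : Filtration ℕ mΩ),
      (∀ n ω, ψ n ω ∈ S) →
      (∀ n, Measurable[ℱ n] (ψ n)) →
      (∀ (n : ℕ) (f : (Fin k → ℝ) → ℝ), Measurable f → (∃ C, ∀ x, |f x| ≤ C) →
        μ[fun ω => f (ψ (n + 1) ω) | ℱ n] =ᵐ[μ] fun ω => Pop f (ψ n ω)) →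
      ∀ f : (Fin k → ℝ) → ℝ, Continuous f → (∃ C, ∀ x, |f x| ≤ C) →
        Tendsto (fun n : ℕ => ∫ ω, f (ψ n ω) ∂μ) atTop (nhds (∫ x, f x ∂π)))
      ∧
    (∀ π' : Measure (Fin k → ℝ), IsProbabilityMeasure π' → π' Sᶜ = 0 →
      (∀ f : (Fin k → ℝ) → ℝ, Measurable f → (∃ C, ∀ x, |f x| ≤ C) →
        ∫ x, Pop f x ∂π' = ∫ x, f x ∂π') →
      π' = π) := by
  classical
  haveI := hπprob
  -- basic numeric facts
  have h1β : (0:ℝ) < 1 - β := by linarith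
  have hr0 : 0 < r := by rw [hr]; positivity
  have hσ : 0 < ∑ i, b₀ i := hb₀pos
  have hrs0 : 0 < rs := by rw [hrs]; linarith
  have hrsσ : (∑ i, b₀ i) ≤ rs := by rw [hrs]; linarith
  have hγβ : γ - β = α / rs := by rw [hγ]; ring
  have hγβ0 : 0 < γ - β := by rw [hγβ]; positivity
  have hβγ : (0:ℝ) ≤ γ - β := hγβ0.le
  have hαr : α = (1 - β) * r := by rw [hr]; field_simp
  have hγ1 : γ < 1 := by
    have h2 : α / rs < 1 - β := by
      rw [div_lt_iff₀ hrs0, hrs, hαr]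
      nlinarith
    rw [hγ]; linarith
  have hγ0 : (0:ℝ) ≤ γ := by linarith
  have hkey : ∀ j, (1 - γ) * p₀ j = (1 - β) * (b₀ j / rs) := by
    intro j
    rw [hp₀ j, hγ, hrs, hαr]
    have hσ' : (∑ i, b₀ i) ≠ 0 := ne_of_gt hσ
    have hrs' : (∑ i, b₀ i) + r ≠ 0 := by positivity
    field_simp
    ring
  have hgb : γ - β = (1 - β) * (r / rs) := by
    rw [hγβ, hαr]; field_simp
  -- S facts
  have hSmem : ∀ x : Fin k → ℝ, x ∈ S ↔
      (∀ i, b₀ i / rs ≤ x i ∧ x i ≤ (b₀ i + r) / rs) ∧ ∑ i, x i = 1 := by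
    intro x; rw [hS]; exact Iff.rfl
  have hSnn : ∀ x ∈ S, ∀ i, 0 ≤ x i := fun x hx i =>
    le_trans (div_nonneg (hb₀nn i) hrs0.le) (((hSmem x).1 hx).1 i).1
  have hSsum : ∀ x ∈ S, ∑ i, x i = 1 := fun x hx => ((hSmem x).1 hx).2
  have hb₀le : ∀ i, b₀ i ≤ ∑ j, b₀ j := fun i =>
    Finset.single_le_sum (fun j _ => hb₀nn j) (Finset.mem_univ i)
  have hp₀sum : ∑ i, p₀ i = 1 := by
    rw [Finset.sum_congr rfl fun i _ => hp₀ i, ← Finset.sum_div]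
    field_simp
  have hp₀S : p₀ ∈ S := by
    rw [hSmem]
    refine ⟨fun i => ⟨?_, ?_⟩, hp₀sum⟩
    · rw [hp₀ i, div_le_div_iff₀ hrs0 hσ]
      nlinarith [hb₀nn i]
    · rw [hp₀ i, div_le_div_iff₀ hσ hrs0, hrs]
      nlinarith [hb₀le i, hb₀nn i]
  have hTS : ∀ (i : Fin k), ∀ x ∈ S, rpT β γ p₀ i x ∈ S := by
    intro i x hx
    obtain ⟨hbox, hsum⟩ := (hSmem x).1 hx
    rw [hSmem]
    constructor
    · intro j
      have hj := hbox j
      have hsplit : (b₀ j + r) / rs = b₀ j / rs + r / rs := add_div _ _ _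
      have hk := hkey j
      have hite0 : (0:ℝ) ≤ (if j = i then γ - β else 0) := by
        split_ifs; exacts [hβγ, le_rfl]
      have hite1 : (if j = i then γ - β else 0) ≤ (1 - β) * (r / rs) := by
        split_ifs
        · exact le_of_eq hgb
        · positivity
      constructor
      · show b₀ j / rs ≤ β * x j + (1 - γ) * p₀ j + (if j = i then γ - β else 0)
        have h1 : β * (b₀ j / rs) ≤ β * x j := mul_le_mul_of_nonneg_left hj.1 hβ0.le
        nlinarith [hk, hite0, h1]
      · show β * x j + (1 - γ) * p₀ j + (if j = i then γ - β else 0) ≤ (b₀ j + r) / rs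
        have h1 : β * x j ≤ β * (b₀ j / rs) + β * (r / rs) := by
          have := mul_le_mul_of_nonneg_left hj.2 hβ0.le
          rw [hsplit, mul_add] at this
          linarith
        rw [hsplit]
        nlinarith [hk, hite1, h1]
    · show (∑ j, (β * x j + (1 - γ) * p₀ j + if j = i then γ - β else 0)) = 1
      rw [Finset.sum_add_distrib, Finset.sum_add_distrib, ← Finset.mul_sum, ← Finset.mul_sum,
        hsum, hp₀sum, Finset.sum_ite_eq' Finset.univ i fun _ => γ - β]
      simp only [Finset.mem_univ, if_true]
      ring
  have hSdecomp : {x : Fin k → ℝ | (∀ i, b₀ i / rs ≤ x i ∧ x i ≤ (b₀ i + r) / rs) ∧ ∑ i, x i = 1}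
      = (⋂ i, ({x : Fin k → ℝ | b₀ i / rs ≤ x i} ∩ {x : Fin k → ℝ | x i ≤ (b₀ i + r) / rs}))
        ∩ {x : Fin k → ℝ | ∑ i, x i = 1} := by
    ext x
    simp only [Set.mem_setOf_eq, Set.mem_inter_iff, Set.mem_iInter]
  have hSmeas : MeasurableSet S := by
    rw [hS, hSdecomp]
    refine MeasurableSet.inter (MeasurableSet.iInter fun i => MeasurableSet.inter ?_ ?_) ?_
    · exact measurableSet_le measurable_const (measurable_pi_apply i)
    · exact measurableSet_le (measurable_pi_apply i) measurable_const
    · exact measurableSet_eq_fun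
        (Finset.univ.measurable_sum fun i _ => measurable_pi_apply i) measurable_const
  have hSclosed : IsClosed S := by
    rw [hS, hSdecomp]
    refine IsClosed.inter (isClosed_iInter fun i => IsClosed.inter ?_ ?_) ?_
    · exact isClosed_le continuous_const (continuous_apply i)
    · exact isClosed_le (continuous_apply i) continuous_const
    · exact isClosed_eq (continuous_finset_sum _ fun i _ => continuous_apply i) continuous_const
  have hSbd : Bornology.IsBounded S := by
    refine Bornology.IsBounded.subset (Metric.isBounded_closedBall
      (x := (0 : Fin k → ℝ)) (r := 1)) ?_
    intro x hx
    rw [Metric.mem_closedBall]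
    refine (dist_pi_le_iff zero_le_one).2 fun i => ?_
    have h1 : x i ≤ 1 := by
      rw [← hSsum x hx]
      exact Finset.single_le_sum (fun j _ => hSnn x hx j) (Finset.mem_univ i)
    have h0 : (0 : Fin k → ℝ) i = 0 := rfl
    rw [h0, Real.dist_eq, sub_zero, abs_of_nonneg (hSnn x hx i)]
    exact h1
  have hScomp : IsCompact S := Metric.isCompact_of_isClosed_isBounded hSclosed hSbd
  have hSne : S.Nonempty := ⟨p₀, hp₀S⟩
  -- operator facts
  have hPop' : ∀ (g : (Fin k → ℝ) → ℝ) (x : Fin k → ℝ),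
      Pop g x = ∑ i, x i * g (rpT β γ p₀ i x) := by
    intro g x; rw [hPop]; rfl
  have hQPop : ∀ (g : (Fin k → ℝ) → ℝ), ∀ x ∈ S, rpQ β γ p₀ S g x = Pop g x := by
    intro g x hx; rw [rpQ_agree hx, hPop']
  have hS2 : ∀ x ∈ S, ∀ y ∈ S, (∑ j, |x j - y j|) ≤ 2 := by
    intro x hx y hy
    calc (∑ j, |x j - y j|) ≤ ∑ j, (x j + y j) := by
          refine Finset.sum_le_sum fun j _ => ?_
          have h1 := hSnn x hx j
          have h2 := hSnn y hy j
          rw [abs_le]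
          constructor <;> linarith
      _ = 2 := by rw [Finset.sum_add_distrib, hSsum x hx, hSsum y hy]; norm_num
  have hdist_sum : ∀ x y : Fin k → ℝ, dist x y ≤ ∑ j, |x j - y j| := by
    intro x y
    refine (dist_pi_le_iff (Finset.sum_nonneg fun j _ => abs_nonneg _)).2 fun i => ?_
    rw [Real.dist_eq]
    exact Finset.single_le_sum (f := fun j => |x j - y j|)
      (fun j _ => abs_nonneg _) (Finset.mem_univ i)
  have hae : ∀ (ρ : Measure (Fin k → ℝ)), ρ Sᶜ = 0 → ∀ᵐ x ∂ρ, x ∈ S := by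
    intro ρ h
    rw [MeasureTheory.ae_iff]
    exact h
  -- invariance of the iterates of `Q`
  have hinv_iter : ∀ (ρ : Measure (Fin k → ℝ)), IsProbabilityMeasure ρ → ρ Sᶜ = 0 →
      (∀ f : (Fin k → ℝ) → ℝ, Measurable f → (∃ C, ∀ x, |f x| ≤ C) →
        ∫ x, Pop f x ∂ρ = ∫ x, f x ∂ρ) →
      ∀ (C : ℝ), 0 ≤ C → ∀ (n : ℕ), ∀ (g : (Fin k → ℝ) → ℝ), Measurable g →
        (∀ x, |g x| ≤ C) →
        ∫ x, ((rpQ β γ p₀ S)^[n] g) x ∂ρ = ∫ x, g x ∂ρ := by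
    intro ρ hρ hρS hinv C hC0 n
    haveI := hρ
    induction n with
    | zero => intro g _ _; simp
    | succ n ih =>
        intro g hmg hgb
        rw [Function.iterate_succ_apply]
        rw [ih (rpQ β γ p₀ S g) (rpQ_measurable hSmeas hmg) (rpQ_bound hSnn hSsum hC0 hgb)]
        have h1 : ∫ x, rpQ β γ p₀ S g x ∂ρ = ∫ x, Pop g x ∂ρ :=
          integral_congr_ae ((hae ρ hρS).mono fun x hx => hQPop g x hx)
        rw [h1, hinv g hmg ⟨C, hgb⟩]
  -- oscillation bound for iterates
  have hπae : ∀ᵐ x ∂π, x ∈ S := hae π hπS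
  have htendγ : ∀ L : ℝ, Tendsto (fun n : ℕ => 4 * L * γ ^ n) atTop (nhds 0) := by
    intro L
    have h1 := tendsto_pow_atTop_nhds_zero_of_lt_one hγ0 hγ1
    have h2 := h1.const_mul (4 * L)
    simpa using h2
  constructor
  · -- convergence in distribution for every initial law
    intro Ω mΩ μ hμ ψ ℱ hψS hadapt hMarkov f hfc hfb
    haveI := hμ
    have hψm : ∀ n, Measurable (ψ n) := fun n => (hadapt n).mono (ℱ.le n) le_rfl
    have hstep : ∀ (n : ℕ) (g : (Fin k → ℝ) → ℝ), Measurable g → (∃ C, ∀ x, |g x| ≤ C) →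
        ∫ ω, g (ψ (n+1) ω) ∂μ = ∫ ω, Pop g (ψ n ω) ∂μ := by
      intro n g hgm hgb
      have h2 := integral_condExp (μ := μ) (f := fun ω => g (ψ (n+1) ω)) (ℱ.le n)
      rw [← h2]
      exact integral_congr_ae (hMarkov n g hgm hgb)
    have hmarg : ∀ (C : ℝ), 0 ≤ C → ∀ (n : ℕ) (g : (Fin k → ℝ) → ℝ), Measurable g →
        (∀ x, |g x| ≤ C) →
        ∫ ω, g (ψ n ω) ∂μ = ∫ ω, ((rpQ β γ p₀ S)^[n] g) (ψ 0 ω) ∂μ := by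
      intro C hC0 n
      induction n with
      | zero => intro g _ _; simp
      | succ n ih =>
          intro g hgm hgb
          rw [hstep n g hgm ⟨C, hgb⟩]
          have h1 : ∫ ω, Pop g (ψ n ω) ∂μ = ∫ ω, rpQ β γ p₀ S g (ψ n ω) ∂μ :=
            integral_congr_ae (Filter.Eventually.of_forall fun ω =>
              (hQPop g _ (hψS n ω)).symm)
          rw [h1, ih (rpQ β γ p₀ S g) (rpQ_measurable hSmeas hgm)
            (rpQ_bound hSnn hSsum hC0 hgb), ← Function.iterate_succ_apply]
    obtain ⟨C, hC⟩ := hfb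
    have hC0 : 0 ≤ C := le_trans (abs_nonneg _) (hC p₀)
    rw [Metric.tendsto_atTop]
    intro ε hε
    obtain ⟨g, L, hL0, hgdist, hgC, hgapp, hgcont⟩ :=
      rp_lip_approx hScomp hSne hfc hC (show (0:ℝ) < ε/4 by linarith)
    have hgm : Measurable g := hgcont.measurable
    have hgLip : rpLipOn S L g := fun x hx y hy =>
      le_trans (hgdist x y) (mul_le_mul_of_nonneg_left (hdist_sum x y) hL0)
    have key : ∀ n : ℕ, |∫ ω, f (ψ n ω) ∂μ - ∫ x, f x ∂π| ≤ ε/2 + 4 * L * γ ^ n := by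
      intro n
      set h := (rpQ β γ p₀ S)^[n] g with hh
      have hhm : Measurable h := rpQ_iter_measurable hSmeas hgm n
      have hhb : ∀ x, |h x| ≤ C := rpQ_iter_bound hSnn hSsum hC0 hgC n
      have hhL : rpLipOn S (γ^n * L) h := rpQ_iter_lip hβ0.le hβγ hTS hSnn hSsum hL0 hgLip n
      have hLn0 : 0 ≤ γ^n * L := mul_nonneg (pow_nonneg hγ0 n) hL0
      have hosc : ∀ x ∈ S, ∀ y ∈ S, |h x - h y| ≤ 2 * (γ^n * L) := by
        intro x hx y hy
        refine le_trans (hhL x hx y hy) ?_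
        calc γ^n * L * ∑ j, |x j - y j| ≤ γ^n * L * 2 :=
              mul_le_mul_of_nonneg_left (hS2 x hx y hy) hLn0
          _ = 2 * (γ^n * L) := by ring
      have hfint : Integrable (fun ω => f (ψ n ω)) μ :=
        rp_integrable_of_bdd (hfc.measurable.comp (hψm n)) (fun ω => hC _)
      have hgint : Integrable (fun ω => g (ψ n ω)) μ :=
        rp_integrable_of_bdd (hgm.comp (hψm n)) (fun ω => hgC _)
      have p1 : |∫ ω, f (ψ n ω) ∂μ - ∫ ω, g (ψ n ω) ∂μ| ≤ ε/4 := by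
        rw [← integral_sub hfint hgint]
        have := norm_integral_le_of_norm_le_const (μ := μ) (C := ε/4)
          (f := fun ω => f (ψ n ω) - g (ψ n ω))
          (Filter.Eventually.of_forall fun ω => by
            rw [Real.norm_eq_abs, abs_sub_comm]
            exact hgapp _ (hψS n ω))
        simpa [Real.norm_eq_abs] using this
      have p3 : |∫ x, g x ∂π - ∫ x, f x ∂π| ≤ ε/4 := by
        rw [← integral_sub (rp_integrable_of_bdd hgm hgC)
          (rp_integrable_of_bdd hfc.measurable hC)]
        have := norm_integral_le_of_norm_le_const (μ := π) (C := ε/4)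
          (f := fun x => g x - f x)
          (hπae.mono fun x hx => by rw [Real.norm_eq_abs]; exact hgapp x hx)
        simpa [Real.norm_eq_abs] using this
      have p2 : |∫ ω, g (ψ n ω) ∂μ - ∫ x, g x ∂π| ≤ 4 * L * γ^n := by
        rw [hmarg C hC0 n g hgm hgC, ← hinv_iter π hπprob hπS hπinv C hC0 n g hgm hgC]
        have p2a : |h p₀ - ∫ ω, h (ψ 0 ω) ∂μ| ≤ 2*(γ^n*L) :=
          rp_abs_sub_integral_le (rp_integrable_of_bdd (hhm.comp (hψm 0)) (fun ω => hhb _))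
            (Filter.Eventually.of_forall fun ω => hosc p₀ hp₀S _ (hψS 0 ω))
        have p2b : |h p₀ - ∫ x, h x ∂π| ≤ 2*(γ^n*L) :=
          rp_abs_sub_integral_le (rp_integrable_of_bdd hhm hhb)
            (hπae.mono fun x hx => hosc p₀ hp₀S x hx)
        calc |∫ ω, h (ψ 0 ω) ∂μ - ∫ x, h x ∂π|
            ≤ |∫ ω, h (ψ 0 ω) ∂μ - h p₀| + |h p₀ - ∫ x, h x ∂π| := abs_sub_le _ _ _
          _ ≤ 2*(γ^n*L) + 2*(γ^n*L) := by
              rw [abs_sub_comm (∫ ω, h (ψ 0 ω) ∂μ) (h p₀)]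
              exact add_le_add p2a p2b
          _ = 4 * L * γ^n := by ring
      have t1 := abs_sub_le (∫ ω, f (ψ n ω) ∂μ) (∫ ω, g (ψ n ω) ∂μ) (∫ x, f x ∂π)
      have t2 := abs_sub_le (∫ ω, g (ψ n ω) ∂μ) (∫ x, g x ∂π) (∫ x, f x ∂π)
      linarith
    have hev : ∀ᶠ n : ℕ in atTop, 4 * L * γ ^ n < ε/2 :=
      (htendγ L).eventually_lt_const (by linarith)
    obtain ⟨N, hN⟩ := Filter.eventually_atTop.1 hev
    refine ⟨N, fun n hn => ?_⟩
    rw [Real.dist_eq]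
    exact lt_of_le_of_lt (key n) (by linarith [hN n hn])
  · -- uniqueness of the invariant measure
    intro π' hπ'p hπ'S hπ'inv
    haveI := hπ'p
    have hπ'ae : ∀ᵐ x ∂π', x ∈ S := hae π' hπ'S
    have hmain : ∀ f : (Fin k → ℝ) → ℝ, Continuous f → (∃ C, ∀ x, |f x| ≤ C) →
        ∫ x, f x ∂π' = ∫ x, f x ∂π := by
      intro f hfc hfb
      obtain ⟨C, hC⟩ := hfb
      have hC0 : 0 ≤ C := le_trans (abs_nonneg _) (hC p₀)
      have habs : ∀ ε : ℝ, 0 < ε → |∫ x, f x ∂π' - ∫ x, f x ∂π| ≤ ε := by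
        intro ε hε
        obtain ⟨g, L, hL0, hgdist, hgC, hgapp, hgcont⟩ :=
          rp_lip_approx hScomp hSne hfc hC (show (0:ℝ) < ε/2 by linarith)
        have hgm : Measurable g := hgcont.measurable
        have hgLip : rpLipOn S L g := fun x hx y hy =>
          le_trans (hgdist x y) (mul_le_mul_of_nonneg_left (hdist_sum x y) hL0)
        have hgeq : ∫ x, g x ∂π' = ∫ x, g x ∂π := by
          have hb : ∀ n : ℕ, |∫ x, g x ∂π' - ∫ x, g x ∂π| ≤ 4 * L * γ ^ n := by
            intro n
            rw [← hinv_iter π' hπ'p hπ'S hπ'inv C hC0 n g hgm hgC,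
              ← hinv_iter π hπprob hπS hπinv C hC0 n g hgm hgC]
            set h := (rpQ β γ p₀ S)^[n] g with hh
            have hhm : Measurable h := rpQ_iter_measurable hSmeas hgm n
            have hhb : ∀ x, |h x| ≤ C := rpQ_iter_bound hSnn hSsum hC0 hgC n
            have hhL : rpLipOn S (γ^n * L) h :=
              rpQ_iter_lip hβ0.le hβγ hTS hSnn hSsum hL0 hgLip n
            have hLn0 : 0 ≤ γ^n * L := mul_nonneg (pow_nonneg hγ0 n) hL0
            have hosc : ∀ x ∈ S, ∀ y ∈ S, |h x - h y| ≤ 2 * (γ^n * L) := by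
              intro x hx y hy
              refine le_trans (hhL x hx y hy) ?_
              calc γ^n * L * ∑ j, |x j - y j| ≤ γ^n * L * 2 :=
                    mul_le_mul_of_nonneg_left (hS2 x hx y hy) hLn0
                _ = 2 * (γ^n * L) := by ring
            have p2a : |h p₀ - ∫ x, h x ∂π'| ≤ 2*(γ^n*L) :=
              rp_abs_sub_integral_le (rp_integrable_of_bdd hhm hhb)
                (hπ'ae.mono fun x hx => hosc p₀ hp₀S x hx)
            have p2b : |h p₀ - ∫ x, h x ∂π| ≤ 2*(γ^n*L) :=
              rp_abs_sub_integral_le (rp_integrable_of_bdd hhm hhb)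
                (hπae.mono fun x hx => hosc p₀ hp₀S x hx)
            calc |∫ x, h x ∂π' - ∫ x, h x ∂π|
                ≤ |∫ x, h x ∂π' - h p₀| + |h p₀ - ∫ x, h x ∂π| := abs_sub_le _ _ _
              _ ≤ 2*(γ^n*L) + 2*(γ^n*L) := by
                  rw [abs_sub_comm (∫ x, h x ∂π') (h p₀)]
                  exact add_le_add p2a p2b
              _ = 4 * L * γ^n := by ring
          have h0 : |∫ x, g x ∂π' - ∫ x, g x ∂π| ≤ 0 := ge_of_tendsto' (htendγ L) hb
          exact sub_eq_zero.1 (abs_nonpos_iff.1 h0)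
        have p1 : |∫ x, f x ∂π' - ∫ x, g x ∂π'| ≤ ε/2 := by
          rw [← integral_sub (rp_integrable_of_bdd hfc.measurable hC)
            (rp_integrable_of_bdd hgm hgC)]
          have := norm_integral_le_of_norm_le_const (μ := π') (C := ε/2)
            (f := fun x => f x - g x)
            (hπ'ae.mono fun x hx => by
              rw [Real.norm_eq_abs, abs_sub_comm]; exact hgapp x hx)
          simpa [Real.norm_eq_abs] using this
        have p3 : |∫ x, g x ∂π - ∫ x, f x ∂π| ≤ ε/2 := by
          rw [← integral_sub (rp_integrable_of_bdd hgm hgC)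
            (rp_integrable_of_bdd hfc.measurable hC)]
          have := norm_integral_le_of_norm_le_const (μ := π) (C := ε/2)
            (f := fun x => g x - f x)
            (hπae.mono fun x hx => by rw [Real.norm_eq_abs]; exact hgapp x hx)
          simpa [Real.norm_eq_abs] using this
        have t1 := abs_sub_le (∫ x, f x ∂π') (∫ x, g x ∂π') (∫ x, f x ∂π)
        have t2 := abs_sub_le (∫ x, g x ∂π') (∫ x, g x ∂π) (∫ x, f x ∂π)
        have hmid : |∫ x, g x ∂π' - ∫ x, g x ∂π| = 0 := by rw [hgeq]; simp
        linarith [t1, t2, hmid, p1, p3]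
      have h0 : |∫ x, f x ∂π' - ∫ x, f x ∂π| ≤ 0 := by
        refine le_of_forall_pos_le_add fun ε hε => ?_
        rw [zero_add]
        exact habs ε hε
      exact sub_eq_zero.1 (abs_nonpos_iff.1 h0)
    -- `f ↦ ∫ f` determines a finite Borel measure
    refine ext_of_forall_lintegral_eq_of_IsFiniteMeasure fun F => ?_
    have hFc : Continuous fun x : Fin k → ℝ => ((F x : NNReal) : ℝ) :=
      NNReal.continuous_coe.comp F.continuous
    have hFb : ∃ C, ∀ x : Fin k → ℝ, |((F x : NNReal) : ℝ)| ≤ C := by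
      obtain ⟨D, hD⟩ := F.bounded
      refine ⟨((F p₀ : NNReal) : ℝ) + D, fun x => ?_⟩
      have h1 := hD x p₀
      rw [NNReal.dist_eq] at h1
      have h2 := abs_le.1 h1
      rw [abs_of_nonneg (NNReal.coe_nonneg (F x))]
      linarith [h2.2]
    obtain ⟨D, hD⟩ := hFb
    have hint' : Integrable (fun x => ((F x : NNReal) : ℝ)) π' :=
      rp_integrable_of_bdd hFc.measurable hD
    have hint : Integrable (fun x => ((F x : NNReal) : ℝ)) π :=
      rp_integrable_of_bdd hFc.measurable hD
    rw [lintegral_coe_eq_integral (fun x => F x) hint',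
      lintegral_coe_eq_integral (fun x => F x) hint]
    rw [hmain _ hFc ⟨D, hD⟩]
end

section
/- Let β ∈ (0,1), α > 0, b₀ ∈ [0,∞)^k with |b₀| > 0, r = α/(1−β), r* = |b₀| + r, p₀ = b₀/|b₀|, γ = β + α/r*, and let π be the unique invariant probability measure of the kernel P on S = {x ∈ ℝ^k : xᵢ ∈ [b₀ᵢ/r*, (b₀ᵢ+r)/r*], |x| = 1} given by (Pf)(x) = Σ_{i=1}^k xᵢ f((βx + (1−γ)p₀)_{(i)}), where z_{(i)} denotes z with (γ−β) added to its i-th coordinate. Then the covariance matrix of π, Σ²_π = ∫_S (x − p₀)(x − p₀)ᵀ dπ(x), satisfies the identity diag(p₀) − p₀ p₀ᵀ = [((γ−β)² + (1 − γ²)) / (γ−β)²] · Σ²_π; equivalently Σ²_π = (γ−β)²/((γ−β)² + 1 − γ²) · (diag(p₀) − p₀ p₀ᵀ). -/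
open MeasureTheory

noncomputable def clamp01 (t : ℝ) : ℝ := max 0 (min 1 t)

lemma clamp01_eq {t : ℝ} (h0 : 0 ≤ t) (h1 : t ≤ 1) : clamp01 t = t := by
  unfold clamp01; rw [min_eq_right h1, max_eq_right h0]

lemma clamp01_nonneg (t : ℝ) : 0 ≤ clamp01 t := le_max_left _ _

lemma clamp01_le_one (t : ℝ) : clamp01 t ≤ 1 :=
  max_le zero_le_one (min_le_left _ _)

lemma measurable_clamp01 : Measurable clamp01 :=
  measurable_const.max (measurable_const.min measurable_id)

lemma abs_clamp01_le (t : ℝ) : |clamp01 t| ≤ 1 :=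
  abs_le.mpr ⟨by linarith [clamp01_nonneg t], clamp01_le_one t⟩

lemma sum_aff {k : ℕ} (x : Fin k → ℝ) (hx : ∑ l, x l = 1) (m : Fin k) (A c : ℝ) :
    ∑ l, x l * (A + if m = l then c else 0) = A + c * x m := by
  have h : ∀ l : Fin k, x l * (A + if m = l then c else 0)
      = x l * A + c * (if m = l then x l else 0) := by
    intro l; rcases eq_or_ne m l with h | h <;> simp [h] <;> ring
  rw [Finset.sum_congr rfl fun l _ => h l, Finset.sum_add_distrib, ← Finset.sum_mul, hx,
    ← Finset.mul_sum, Finset.sum_ite_eq]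
  simp

lemma sum_quad {k : ℕ} (x : Fin k → ℝ) (hx : ∑ l, x l = 1) (i j : Fin k) (a b c : ℝ) :
    ∑ l, x l * ((a + if i = l then c else 0) * (b + if j = l then c else 0))
      = a * b + a * c * x j + b * c * x i + c ^ 2 * (if i = j then x i else 0) := by
  have h : ∀ l : Fin k, x l * ((a + if i = l then c else 0) * (b + if j = l then c else 0))
      = x l * (a * b) + a * c * (if j = l then x l else 0) + b * c * (if i = l then x l else 0)
        + c ^ 2 * (if i = l then (if j = l then x l else 0) else 0) := by
    intro l
    rcases eq_or_ne i l with h1 | h1 <;> rcases eq_or_ne j l with h2 | h2 <;>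
      simp [h1, h2] <;> ring
  rw [Finset.sum_congr rfl fun l _ => h l]
  rw [Finset.sum_add_distrib, Finset.sum_add_distrib, Finset.sum_add_distrib]
  rw [← Finset.sum_mul, hx, ← Finset.mul_sum, ← Finset.mul_sum, ← Finset.mul_sum,
    Finset.sum_ite_eq, Finset.sum_ite_eq, Finset.sum_ite_eq]
  simp only [Finset.mem_univ, if_true]
  rcases eq_or_ne i j with hij | hij
  · subst hij; simp
  · simp [hij, Ne.symm hij]

/-- **Covariance identity for the invariant measure, `β ∈ (0,1)`** (equation (3.11)):
`diag(p₀) − p₀ p₀ᵀ = [((γ−β)² + (1−γ²))/(γ−β)²] Σ²_π`, where `Σ²_π` is the covariance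
matrix of the invariant probability measure `π` of the predictive-mean kernel. -/
theorem rp_urn_invariant_covariance
    (k : ℕ) (hk : 2 ≤ k)
    (α β : ℝ) (hα : 0 < α) (hβ0 : 0 < β) (hβ1 : β < 1)
    (b₀ : Fin k → ℝ) (hb₀nn : ∀ i, 0 ≤ b₀ i) (hb₀pos : 0 < ∑ i, b₀ i)
    (r rs : ℝ) (hr : r = α / (1 - β)) (hrs : rs = (∑ i, b₀ i) + r)
    (p₀ : Fin k → ℝ) (hp₀ : ∀ i, p₀ i = b₀ i / ∑ j, b₀ j)
    (γ : ℝ) (hγ : γ = β + α / rs)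
    (S : Set (Fin k → ℝ))
    (hS : S = {x | (∀ i, b₀ i / rs ≤ x i ∧ x i ≤ (b₀ i + r) / rs) ∧ ∑ i, x i = 1})
    (Pop : ((Fin k → ℝ) → ℝ) → ((Fin k → ℝ) → ℝ))
    (hPop : ∀ f x, Pop f x
        = ∑ i, x i * f (fun j => β * x j + (1 - γ) * p₀ j + if j = i then γ - β else 0))
    (π : Measure (Fin k → ℝ)) (hπprob : IsProbabilityMeasure π) (hπS : π Sᶜ = 0)
    (hπinv : ∀ f : (Fin k → ℝ) → ℝ, Measurable f → (∃ C, ∀ x, |f x| ≤ C) →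
      ∫ x, Pop f x ∂π = ∫ x, f x ∂π)
    (hπuniq : ∀ π' : Measure (Fin k → ℝ), IsProbabilityMeasure π' → π' Sᶜ = 0 →
      (∀ f : (Fin k → ℝ) → ℝ, Measurable f → (∃ C, ∀ x, |f x| ≤ C) →
        ∫ x, Pop f x ∂π' = ∫ x, f x ∂π') →
      π' = π) :
    ∀ i j : Fin k,
      (if i = j then p₀ i else 0) - p₀ i * p₀ j
        = ((γ - β) ^ 2 + (1 - γ ^ 2)) / (γ - β) ^ 2
            * ∫ x, (x i - p₀ i) * (x j - p₀ j) ∂π := by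
  intro i j
  have h1β : 0 < 1 - β := by linarith
  have hrpos : 0 < r := by rw [hr]; positivity
  have hrsp : 0 < rs := by rw [hrs]; positivity
  have hγβ : 0 < γ - β := by
    have : γ - β = α / rs := by rw [hγ]; ring
    rw [this]; positivity
  have h1γ : 0 < 1 - γ := by
    have hα' : (1 - β) * r = α := by rw [hr]; field_simp
    have h2 : (1 - β) * rs = (1 - β) * (∑ i, b₀ i) + α := by rw [hrs, mul_add, hα']
    have h3 : α < (1 - β) * rs := by nlinarith [mul_pos h1β hb₀pos]
    have h4 : α / rs < 1 - β := (div_lt_iff₀ hrsp).mpr (by nlinarith)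
    rw [hγ]; linarith
  have hp0nn : ∀ m, 0 ≤ p₀ m := fun m => by
    rw [hp₀]; exact div_nonneg (hb₀nn m) (le_of_lt hb₀pos)
  have hp0le : ∀ m, p₀ m ≤ 1 := fun m => by
    rw [hp₀]
    exact div_le_one_of_le₀ (Finset.single_le_sum (fun l _ => hb₀nn l) (Finset.mem_univ m))
      (le_of_lt hb₀pos)
  -- membership facts
  have hmemS : ∀ x ∈ S, (∀ m, 0 ≤ x m ∧ x m ≤ 1) ∧ ∑ l, x l = 1 := by
    intro x hx
    rw [hS] at hx
    obtain ⟨hb, hs⟩ := hx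
    refine ⟨fun m => ⟨?_, ?_⟩, hs⟩
    · exact le_trans (div_nonneg (hb₀nn m) (le_of_lt hrsp)) (hb m).1
    · refine le_trans (hb m).2 ((div_le_one hrsp).mpr ?_)
      rw [hrs]
      have := Finset.single_le_sum (fun l _ => hb₀nn l) (Finset.mem_univ m)
      linarith
  have haeS : ∀ᵐ x ∂π, x ∈ S := by
    rw [ae_iff]
    simpa [Set.compl_def] using hπS
  -- clamp removal for kernel images
  have hz : ∀ (x : Fin k → ℝ), (∀ m, 0 ≤ x m ∧ x m ≤ 1) → ∀ (l m : Fin k),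
      clamp01 (β * x m + (1 - γ) * p₀ m + if m = l then γ - β else 0)
        = β * x m + (1 - γ) * p₀ m + if m = l then γ - β else 0 := by
    intro x hx l m
    have h0 : (0:ℝ) ≤ (if m = l then γ - β else 0) := by
      split
      · linarith
      · exact le_rfl
    have h1 : (if m = l then γ - β else 0) ≤ γ - β := by
      split
      · exact le_rfl
      · linarith
    apply clamp01_eq
    · have := (hx m).1
      have := hp0nn m
      have : 0 ≤ β * x m := by nlinarith
      nlinarith [hp0nn m]
    · nlinarith [(hx m).2, hp0le m]
  -- integrability of bounded measurable functions
  have hPint : ∀ (f : (Fin k → ℝ) → ℝ) (C : ℝ), Measurable f → (∀ x, |f x| ≤ C) →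
      Integrable f π := by
    intro f C hm hb
    exact (integrable_const C).mono' hm.aestronglyMeasurable
      (ae_of_all _ fun x => by simpa [Real.norm_eq_abs] using hb x)
  -- measurability and integrability of clamped coordinates
  have hcm : ∀ m : Fin k, Measurable fun x : Fin k → ℝ => clamp01 (x m) := fun m =>
    measurable_clamp01.comp (measurable_pi_apply m)
  have hcint : ∀ m : Fin k, Integrable (fun x : Fin k → ℝ => clamp01 (x m)) π := fun m =>
    hPint _ 1 (hcm m) fun x => abs_clamp01_le _
  -- the mean of the invariant measure is p₀
  have hmean : ∀ m : Fin k, ∫ x, clamp01 (x m) ∂π = p₀ m := by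
    intro m
    have hinv := hπinv (fun y => clamp01 (y m)) (hcm m) ⟨1, fun x => abs_clamp01_le _⟩
    have hae : (fun x => Pop (fun y => clamp01 (y m)) x) =ᵐ[π]
        fun x => γ * clamp01 (x m) + (1 - γ) * p₀ m := by
      filter_upwards [haeS] with x hx
      obtain ⟨hb, hs⟩ := hmemS x hx
      simp only [hPop]
      calc ∑ l, x l * clamp01 (β * x m + (1 - γ) * p₀ m + if m = l then γ - β else 0)
          = ∑ l, x l * ((β * x m + (1 - γ) * p₀ m) + if m = l then γ - β else 0) := by
            refine Finset.sum_congr rfl fun l _ => ?_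
            rw [hz x hb l m]
        _ = (β * x m + (1 - γ) * p₀ m) + (γ - β) * x m := sum_aff x hs m _ _
        _ = γ * clamp01 (x m) + (1 - γ) * p₀ m := by
            rw [clamp01_eq (hb m).1 (hb m).2]; ring
    rw [integral_congr_ae hae,
      integral_add ((hcint m).const_mul γ) (integrable_const _),
      integral_const_mul, integral_const] at hinv
    simp only [measure_univ, probReal_univ, ENNReal.toReal_one, smul_eq_mul, one_mul] at hinv
    set M := ∫ x, clamp01 (x m) ∂π with hM
    have h5 : (1 - γ) * M = (1 - γ) * p₀ m := by linarith
    exact mul_left_cancel₀ (ne_of_gt h1γ) h5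
  -- covariance test function
  set δ : ℝ := if i = j then 1 else 0 with hδ
  set F2 : (Fin k → ℝ) → ℝ :=
    fun x => (clamp01 (x i) - p₀ i) * (clamp01 (x j) - p₀ j) with hF2
  have hF2m : Measurable F2 :=
    (((hcm i).sub measurable_const).mul ((hcm j).sub measurable_const))
  have habs : ∀ (m : Fin k) (x : Fin k → ℝ), |clamp01 (x m) - p₀ m| ≤ 1 := by
    intro m x
    have := clamp01_nonneg (x m)
    have := clamp01_le_one (x m)
    have := hp0nn m
    have := hp0le m
    rw [abs_le]; constructor <;> linarith
  have hF2b : ∀ x, |F2 x| ≤ 1 := by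
    intro x
    rw [hF2, abs_mul]
    exact mul_le_one₀ (habs i x) (abs_nonneg _) (habs j x)
  have hF2int : Integrable F2 π := hPint _ 1 hF2m hF2b
  have hinv2 := hπinv F2 hF2m ⟨1, hF2b⟩
  have hae2 : (fun x => Pop F2 x) =ᵐ[π]
      fun x => (β ^ 2 + 2 * β * (γ - β)) * F2 x
        + (γ - β) ^ 2 * ((δ - p₀ j) * clamp01 (x i) - p₀ i * clamp01 (x j) + p₀ i * p₀ j) := by
    filter_upwards [haeS] with x hx
    obtain ⟨hb, hs⟩ := hmemS x hx
    simp only [hPop, hF2]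
    have hstep : ∀ l : Fin k,
        x l * ((clamp01 (β * x i + (1 - γ) * p₀ i + if i = l then γ - β else 0) - p₀ i)
          * (clamp01 (β * x j + (1 - γ) * p₀ j + if j = l then γ - β else 0) - p₀ j))
        = x l * (((β * x i + (1 - γ) * p₀ i - p₀ i) + if i = l then γ - β else 0)
            * ((β * x j + (1 - γ) * p₀ j - p₀ j) + if j = l then γ - β else 0)) := by
      intro l
      rw [hz x hb l i, hz x hb l j]
      ring
    rw [Finset.sum_congr rfl fun l _ => hstep l, sum_quad x hs i j _ _ _]
    have hite : (if i = j then x i else 0) = δ * x i := by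
      rw [hδ]; by_cases h : i = j <;> simp [h]
    rw [hite, clamp01_eq (hb i).1 (hb i).2, clamp01_eq (hb j).1 (hb j).2]
    ring
  rw [integral_congr_ae hae2] at hinv2
  have hGint1 : Integrable (fun x : Fin k → ℝ =>
      (δ - p₀ j) * clamp01 (x i) - p₀ i * clamp01 (x j)) π :=
    ((hcint i).const_mul _).sub ((hcint j).const_mul _)
  have hGint2 : Integrable (fun x : Fin k → ℝ =>
      (γ - β) ^ 2 * ((δ - p₀ j) * clamp01 (x i) - p₀ i * clamp01 (x j) + p₀ i * p₀ j)) π :=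
    ((hGint1.add (integrable_const _)).const_mul _ : _)
  have hGadd : Integrable (fun x : Fin k → ℝ =>
      (δ - p₀ j) * clamp01 (x i) - p₀ i * clamp01 (x j) + p₀ i * p₀ j) π :=
    (hGint1.add (integrable_const _) : _)
  rw [integral_add (hF2int.const_mul _) hGint2,
    integral_const_mul, integral_const_mul,
    integral_add hGint1 (integrable_const _),
    integral_sub ((hcint i).const_mul _) ((hcint j).const_mul _),
    integral_const_mul, integral_const_mul, hmean i, hmean j, integral_const] at hinv2
  simp only [measure_univ, probReal_univ, ENNReal.toReal_one, smul_eq_mul, one_mul] at hinv2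
  -- relate the raw integral to the clamped one
  have hraw : ∫ x, (x i - p₀ i) * (x j - p₀ j) ∂π = ∫ x, F2 x ∂π := by
    refine integral_congr_ae ?_
    filter_upwards [haeS] with x hx
    obtain ⟨hb, _⟩ := hmemS x hx
    show (x i - p₀ i) * (x j - p₀ j) = (clamp01 (x i) - p₀ i) * (clamp01 (x j) - p₀ j)
    rw [clamp01_eq (hb i).1 (hb i).2, clamp01_eq (hb j).1 (hb j).2]
  have hifp : (if i = j then p₀ i else 0) = δ * p₀ i := by
    rw [hδ]; by_cases h : i = j <;> simp [h]
  rw [hraw, hifp, div_mul_eq_mul_div,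
    eq_div_iff (pow_ne_zero 2 (ne_of_gt hγβ))]
  set M2 := ∫ x, F2 x ∂π with hM2
  linear_combination hinv2
end

section
/- For the Rescaled Pólya urn with β ∈ (0,1) and b₀ = 0 (so B₀ᵢ > 0 for all i), the predictive mean process (ψ_n) is a bounded martingale, hence converges almost surely (and in mean) to a random vector ψ_∞; moreover ψ_∞ takes values in the set of canonical basis vectors {e₁,…,e_k}, almost surely ξ_n = ψ_∞ eventually, and P(ψ_∞ = eᵢ) = B₀ᵢ/|B₀| for each i = 1,…,k. -/
open MeasureTheory ProbabilityTheory Filter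

private lemma measurable_pi_of_comp {Ω : Type*} {k : ℕ} [m : MeasurableSpace Ω]
    {f : Ω → Fin k → ℝ} (h : ∀ i, Measurable[m] fun ω => f ω i) : Measurable[m] f :=
  measurable_pi_iff.mpr h

/-- **Rescaled Pólya urn, `β ∈ (0,1)`, `b₀ = 0`** (Remark 3.4): the predictive mean `(ψ_n)`
is a bounded martingale; it converges a.s. and in mean to a random vector `ψ_∞` with values
in the canonical basis, eventually `ξ_n = ψ_∞`, and `P(ψ_∞ = eᵢ) = B₀ᵢ/|B₀|`. -/
theorem rp_urn_beta_lt_one_b_zero_martingale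
    {Ω : Type*} {mΩ : MeasurableSpace Ω} {μ : Measure Ω} [IsProbabilityMeasure μ]
    (k : ℕ) (hk : 2 ≤ k)
    (α β : ℝ) (hα : 0 < α) (hβ0 : 0 < β) (hβ1 : β < 1)
    (b₀ B₀ : Fin k → ℝ) (hb₀ : b₀ = 0) (hB₀pos : ∀ i, 0 < B₀ i)
    (ξ B : ℕ → Ω → Fin k → ℝ) (ℱ : Filtration ℕ mΩ)
    (hξval : ∀ n, 1 ≤ n → ∀ ω, ∃ i, ξ n ω = Pi.single i 1)
    (hadapt : ∀ n, 1 ≤ n → Measurable[ℱ n] (ξ n))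
    (hB0 : ∀ ω, B 0 ω = B₀)
    (hBrec : ∀ n ω, B (n + 1) ω = β • B n ω + α • ξ (n + 1) ω)
    (ψ : ℕ → Ω → Fin k → ℝ)
    (hψ : ∀ n ω i, ψ n ω i = (b₀ i + B n ω i) / ∑ j, (b₀ j + B n ω j))
    (hcond : ∀ n i, μ[fun ω => ξ (n + 1) ω i | ℱ n] =ᵐ[μ] fun ω => ψ n ω i) :
    Martingale ψ ℱ μ ∧
    ∃ ψinf : Ω → Fin k → ℝ, Measurable ψinf ∧
      (∀ᵐ ω ∂μ, Tendsto (fun n => ψ n ω) atTop (nhds (ψinf ω))) ∧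
      Tendsto (fun n => ∫ ω, ‖ψ n ω - ψinf ω‖ ∂μ) atTop (nhds 0) ∧
      (∀ᵐ ω ∂μ, ∃ i, ψinf ω = Pi.single i 1) ∧
      (∀ᵐ ω ∂μ, ∃ N, ∀ n, N ≤ n → ξ n ω = ψinf ω) ∧
      (∀ i, μ {ω | ψinf ω = Pi.single i 1} = ENNReal.ofReal (B₀ i / ∑ j, B₀ j)) := by
  classical
  subst hb₀
  simp only [Pi.zero_apply, zero_add] at hψ
  have hk0 : 0 < k := lt_of_lt_of_le two_pos hk
  have h1β : (0:ℝ) < 1 - β := by linarith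
  set L : ℝ := α / (1 - β) with hL
  have hβL : β * L + α = L := by
    rw [hL]; field_simp; ring
  set S0 : ℝ := ∑ j, B₀ j with hS0
  have hS0pos : 0 < S0 := Finset.sum_pos (fun j _ => hB₀pos j) ⟨⟨0, hk0⟩, Finset.mem_univ _⟩
  set s : ℕ → ℝ := fun n => L + β ^ n * (S0 - L) with hsdef
  have hs0 : s 0 = S0 := by simp [hsdef]
  have hsrec : ∀ n, s (n + 1) = β * s n + α := by
    intro n
    simp only [hsdef, pow_succ]
    linear_combination -hβL
  have hspos : ∀ n, 0 < s n := by
    intro n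
    induction n with
    | zero => rw [hs0]; exact hS0pos
    | succ n ih => rw [hsrec]; positivity
  -- facts about ξ
  have hξsum : ∀ n ω, 1 ≤ n → ∑ j, ξ n ω j = 1 := by
    intro n ω hn
    obtain ⟨i, hi⟩ := hξval n hn ω
    rw [hi]
    simp [Pi.single_apply]
  have hξnonneg : ∀ n ω j, 1 ≤ n → 0 ≤ ξ n ω j := by
    intro n ω j hn
    obtain ⟨i, hi⟩ := hξval n hn ω
    rw [hi, Pi.single_apply]
    split <;> norm_num
  -- positivity of B
  have hBpos : ∀ n ω i, 0 < B n ω i := by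
    intro n
    induction n with
    | zero => intro ω i; rw [hB0]; exact hB₀pos i
    | succ n ih =>
      intro ω i
      rw [hBrec]
      simp only [Pi.add_apply, Pi.smul_apply, smul_eq_mul]
      exact add_pos_of_pos_of_nonneg (mul_pos hβ0 (ih ω i))
        (mul_nonneg hα.le (hξnonneg (n+1) ω i le_add_self))
  -- total mass is deterministic
  have hSsum : ∀ n ω, ∑ j, B n ω j = s n := by
    intro n
    induction n with
    | zero => intro ω; rw [hs0]; simp [hB0, hS0]
    | succ n ih =>
      intro ω
      rw [hsrec]
      calc ∑ j, B (n+1) ω j = ∑ j, (β * B n ω j + α * ξ (n+1) ω j) := by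
            refine Finset.sum_congr rfl fun j _ => ?_
            rw [hBrec]; simp [smul_eq_mul]
        _ = β * ∑ j, B n ω j + α * ∑ j, ξ (n+1) ω j := by
            rw [Finset.sum_add_distrib, Finset.mul_sum, Finset.mul_sum]
        _ = β * s n + α := by rw [ih, hξsum (n+1) ω le_add_self, mul_one]
  have hψ' : ∀ n ω i, ψ n ω i = B n ω i / s n := by
    intro n ω i; rw [hψ, hSsum]
  have hψpos : ∀ n ω i, 0 < ψ n ω i := by
    intro n ω i; rw [hψ']; exact div_pos (hBpos n ω i) (hspos n)
  have hψle1 : ∀ n ω i, ψ n ω i ≤ 1 := by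
    intro n ω i
    rw [hψ', div_le_one (hspos n), ← hSsum n ω]
    exact Finset.single_le_sum (fun j _ => (hBpos n ω j).le) (Finset.mem_univ i)
  -- measurability of B and ψ
  have hBmeas : ∀ n, Measurable[ℱ n] (B n) := by
    intro n
    induction n with
    | zero =>
      have : B 0 = fun _ => B₀ := funext hB0
      rw [this]; exact measurable_const
    | succ n ih =>
      have h1 : Measurable[ℱ (n+1)] (B n) := ih.mono (ℱ.mono (Nat.le_succ n)) le_rfl
      have h2 : Measurable[ℱ (n+1)] (ξ (n+1)) := hadapt (n+1) le_add_self
      rw [show B (n+1) = fun ω => β • B n ω + α • ξ (n+1) ω from funext (hBrec n)]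
      refine measurable_pi_of_comp (m := ℱ (n+1)) fun i => ?_
      simp only [Pi.add_apply, Pi.smul_apply, smul_eq_mul]
      exact (((measurable_pi_apply i).comp h1).const_mul β).add
        (((measurable_pi_apply i).comp h2).const_mul α)
  have hψmeas : ∀ n, Measurable[ℱ n] (ψ n) := by
    intro n
    have : ψ n = fun ω i => B n ω i / s n := by
      funext ω i; exact hψ' n ω i
    rw [this]
    exact measurable_pi_of_comp (m := ℱ n) fun i =>
      ((measurable_pi_apply i).comp (hBmeas n)).div_const (s n)
  have hψsm : ∀ n, StronglyMeasurable[ℱ n] (ψ n) := fun n => (hψmeas n).stronglyMeasurable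
  have hψnorm : ∀ n ω, ‖ψ n ω‖ ≤ 1 := by
    intro n ω
    refine (pi_norm_le_iff_of_nonneg zero_le_one).mpr fun i => ?_
    rw [Real.norm_eq_abs, abs_le]
    exact ⟨by linarith [hψpos n ω i], hψle1 n ω i⟩
  have hψint : ∀ n, Integrable (ψ n) μ :=
    fun n => (integrable_const (1:ℝ)).mono'
      (((hψsm n).mono (ℱ.le n)).aestronglyMeasurable) (ae_of_all _ fun ω => hψnorm n ω)
  have hψiint : ∀ n i, Integrable (fun ω => ψ n ω i) μ := by
    intro n i
    refine (integrable_const (1:ℝ)).mono'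
      (((measurable_pi_apply i).comp ((hψmeas n).mono (ℱ.le n) le_rfl)).aestronglyMeasurable)
      (ae_of_all _ fun ω => ?_)
    rw [Real.norm_eq_abs, abs_le]
    exact ⟨by linarith [hψpos n ω i], hψle1 n ω i⟩
  have hBiint : ∀ n i, Integrable (fun ω => B n ω i) μ := by
    intro n i
    refine (integrable_const (s n)).mono'
      (((measurable_pi_apply i).comp ((hBmeas n).mono (ℱ.le n) le_rfl)).aestronglyMeasurable)
      (ae_of_all _ fun ω => ?_)
    rw [Real.norm_eq_abs, abs_le]
    constructor
    · linarith [hBpos n ω i, hspos n]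
    · rw [← hSsum n ω]
      exact Finset.single_le_sum (fun j _ => (hBpos n ω j).le) (Finset.mem_univ i)
  have hξiint : ∀ n i, Integrable (fun ω => ξ (n+1) ω i) μ := by
    intro n i
    refine (integrable_const (1:ℝ)).mono'
      (((measurable_pi_apply i).comp
        ((hadapt (n+1) le_add_self).mono (ℱ.le (n+1)) le_rfl)).aestronglyMeasurable)
      (ae_of_all _ fun ω => ?_)
    obtain ⟨j, hj⟩ := hξval (n+1) le_add_self ω
    rw [hj, Real.norm_eq_abs, Pi.single_apply]
    split <;> norm_num
  -- one-step conditional expectation for components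
  have hcomp : ∀ n i, (μ[fun ω => ψ (n+1) ω i|ℱ n]) =ᵐ[μ] fun ω => ψ n ω i := by
    intro n i
    have hrw : (fun ω => ψ (n+1) ω i)
        = (β / s (n+1)) • (fun ω => B n ω i) + (α / s (n+1)) • (fun ω => ξ (n+1) ω i) := by
      funext ω
      simp only [Pi.add_apply, Pi.smul_apply, smul_eq_mul]
      rw [hψ' (n+1) ω i, hBrec n ω]
      simp only [Pi.add_apply, Pi.smul_apply, smul_eq_mul]
      have h1 : s (n+1) ≠ 0 := (hspos (n+1)).ne'
      field_simp
    rw [hrw]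
    have hBm : StronglyMeasurable[ℱ n] (fun ω => B n ω i) :=
      ((measurable_pi_apply i).comp (hBmeas n)).stronglyMeasurable
    have h4 : μ[fun ω => B n ω i|ℱ n] = fun ω => B n ω i :=
      condExp_of_stronglyMeasurable (ℱ.le n) hBm (hBiint n i)
    have h1 := condExp_add (μ := μ) (m := ℱ n)
      ((hBiint n i).smul (β / s (n+1))) ((hξiint n i).smul (α / s (n+1)))
    have h2 := condExp_smul (μ := μ) (m := ℱ n) (β / s (n+1)) (fun ω => B n ω i)
    have h3 := condExp_smul (μ := μ) (m := ℱ n) (α / s (n+1)) (fun ω => ξ (n+1) ω i)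
    have h5 := hcond n i
    filter_upwards [h1, h2, h3, h5] with ω e1 e2 e3 e5
    rw [e1]
    simp only [Pi.add_apply]
    rw [e2, e3]
    simp only [Pi.smul_apply, smul_eq_mul]
    rw [h4, e5, hψ' n ω i]
    have hsn : s n ≠ 0 := (hspos n).ne'
    have hsn1 : s (n+1) ≠ 0 := (hspos (n+1)).ne'
    rw [hsrec] at hsn1 ⊢
    field_simp
  -- component martingales
  have hmart_comp : ∀ i, Martingale (fun n ω => ψ n ω i) ℱ μ := by
    intro i
    refine martingale_nat (fun n => ((measurable_pi_apply i).comp (hψmeas n)).stronglyMeasurable)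
      (fun n => hψiint n i) (fun n => (hcomp n i).symm)
  -- vector one-step condexp
  have hproj : ∀ (f : Ω → Fin k → ℝ) (ν : Measure Ω), Integrable f ν → ∀ i,
      (∫ x, f x ∂ν) i = ∫ x, f x i ∂ν := by
    intro f ν hf i
    have := (ContinuousLinearMap.proj (R := ℝ) (φ := fun _ : Fin k => ℝ) i).integral_comp_comm hf
    simpa using this.symm
  have hstep : ∀ n, ψ n =ᵐ[μ] μ[ψ (n+1)|ℱ n] := by
    intro n
    refine ae_eq_condExp_of_forall_setIntegral_eq (ℱ.le n) (hψint (n+1))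
      (fun t ht hμ => (hψint n).integrableOn) (fun t ht hμ => ?_)
      ((hψsm n).aestronglyMeasurable)
    have htm : MeasurableSet t := ℱ.le n t ht
    refine funext fun i => ?_
    rw [hproj _ _ ((hψint n).integrableOn) i, hproj _ _ ((hψint (n+1)).integrableOn) i]
    calc ∫ x in t, ψ n x i ∂μ
        = ∫ x in t, (μ[fun ω => ψ (n+1) ω i|ℱ n]) x ∂μ :=
          setIntegral_congr_ae htm ((hcomp n i).symm.mono fun x hx _ => hx)
      _ = ∫ x in t, ψ (n+1) x i ∂μ := setIntegral_condExp (ℱ.le n) (hψiint (n+1) i) ht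
  have hmartψ : Martingale ψ ℱ μ := by
    refine ⟨fun n => hψsm n, fun m n hmn => ?_⟩
    induction n with
    | zero =>
      obtain rfl : m = 0 := Nat.le_zero.mp hmn
      exact Eventually.of_forall fun ω => congrFun (condExp_of_stronglyMeasurable (ℱ.le 0) (hψsm 0) (hψint 0)) ω
    | succ n ih =>
      rcases Nat.lt_or_ge m (n+1) with hlt | hge
      · have hm : m ≤ n := Nat.lt_succ_iff.mp hlt
        calc μ[ψ (n+1)|ℱ m]
            =ᵐ[μ] μ[μ[ψ (n+1)|ℱ n]|ℱ m] := (condExp_condExp_of_le (ℱ.mono hm) (ℱ.le n)).symm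
          _ =ᵐ[μ] μ[ψ n|ℱ m] := condExp_congr_ae (hstep n).symm
          _ =ᵐ[μ] ψ m := ih hm
      · obtain rfl : m = n + 1 := le_antisymm hmn hge
        exact Eventually.of_forall fun ω => congrFun (condExp_of_stronglyMeasurable (ℱ.le _) (hψsm _) (hψint _)) ω
  refine ⟨hmartψ, ?_⟩
  -- a.s. convergence of components
  have hbdd : ∀ i n, eLpNorm (fun ω => ψ n ω i) 1 μ ≤ ((1 : NNReal) : ENNReal) := by
    intro i n
    refine (eLpNorm_le_of_ae_bound (C := 1) (ae_of_all _ fun ω => ?_)).trans ?_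
    · rw [Real.norm_eq_abs, abs_le]
      exact ⟨by linarith [hψpos n ω i], hψle1 n ω i⟩
    · simp
  have haecv : ∀ᵐ ω ∂μ, ∃ l : Fin k → ℝ, Tendsto (fun n => ψ n ω) atTop (nhds l) := by
    have h := ae_all_iff.mpr fun i : Fin k =>
      ((hmart_comp i).submartingale.exists_ae_tendsto_of_bdd (hbdd i))
    filter_upwards [h] with ω hω
    choose c hc using hω
    exact ⟨c, tendsto_pi_nhds.mpr hc⟩
  obtain ⟨ψinf, hψinfmeas, htend⟩ :=
    measurable_limit_of_tendsto_metrizable_ae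
      (fun n => ((hψmeas n).mono (ℱ.le n) le_rfl).aemeasurable) haecv
  -- limit of s
  have hstend : Tendsto s atTop (nhds L) := by
    have h0 : Tendsto (fun n => β ^ n * (S0 - L)) atTop (nhds 0) := by
      simpa using (tendsto_pow_atTop_nhds_zero_of_lt_one hβ0.le hβ1).mul_const (S0 - L)
    have := (tendsto_const_nhds (x := L)).add h0
    simpa using this
  -- recover ξ from ψ
  have hξeq : ∀ n ω, ξ (n+1) ω = (s (n+1) / α) • ψ (n+1) ω - ((β * s n) / α) • ψ n ω := by
    intro n ω
    funext i
    simp only [Pi.sub_apply, Pi.smul_apply, smul_eq_mul]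
    rw [hψ' (n+1) ω i, hψ' n ω i]
    have hBi : B (n+1) ω i = β * B n ω i + α * ξ (n+1) ω i := by
      rw [hBrec]; simp [smul_eq_mul]
    rw [hBi]
    have hsn : s n ≠ 0 := (hspos n).ne'
    have hsn1 : s (n+1) ≠ 0 := (hspos (n+1)).ne'
    field_simp
    ring
  have hξtend : ∀ ω, Tendsto (fun n => ψ n ω) atTop (nhds (ψinf ω)) →
      Tendsto (fun n => ξ (n+1) ω) atTop (nhds (ψinf ω)) := by
    intro ω hω
    have h1 : Tendsto (fun n => (s (n+1) / α) • ψ (n+1) ω) atTop (nhds ((L / α) • ψinf ω)) :=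
      ((hstend.comp (tendsto_add_atTop_nat 1)).div_const α).smul
        (hω.comp (tendsto_add_atTop_nat 1))
    have h2 : Tendsto (fun n => ((β * s n) / α) • ψ n ω) atTop
        (nhds (((β * L) / α) • ψinf ω)) :=
      ((tendsto_const_nhds.mul hstend).div_const α).smul hω
    have h3 := h1.sub h2
    have key : (L / α) • ψinf ω - ((β * L) / α) • ψinf ω = ψinf ω := by
      rw [← sub_smul]
      have hc : L / α - (β * L) / α = 1 := by
        have hd : L - β * L = α := by linarith [hβL]
        rw [div_sub_div_same, hd, div_self hα.ne']
      rw [hc, one_smul]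
    rw [key] at h3
    have heq : (fun n => (s (n+1) / α) • ψ (n+1) ω - ((β * s n) / α) • ψ n ω)
        = fun n => ξ (n+1) ω := funext fun n => (hξeq n ω).symm
    rwa [heq] at h3
  -- basis set
  have hSbclosed : IsClosed (Set.range fun i : Fin k => Pi.single i (1:ℝ)) :=
    (Set.finite_range _).isClosed
  have hmemS : ∀ ω, Tendsto (fun n => ψ n ω) atTop (nhds (ψinf ω)) →
      ∃ i, ψinf ω = Pi.single i 1 := by
    intro ω hω
    have hmem : ψinf ω ∈ Set.range fun i : Fin k => Pi.single i (1:ℝ) := by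
      refine hSbclosed.mem_of_tendsto (hξtend ω hω) (Eventually.of_forall fun n => ?_)
      obtain ⟨i, hi⟩ := hξval (n+1) le_add_self ω
      exact ⟨i, hi.symm⟩
    obtain ⟨i, hi⟩ := hmem
    exact ⟨i, hi.symm⟩
  have hbasis : ∀ᵐ ω ∂μ, ∃ i, ψinf ω = Pi.single i 1 := by
    filter_upwards [htend] with ω hω using hmemS ω hω
  -- eventual equality of ξ with ψinf
  have hev : ∀ᵐ ω ∂μ, ∃ N, ∀ n, N ≤ n → ξ n ω = ψinf ω := by
    filter_upwards [htend] with ω hω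
    obtain ⟨i, hi⟩ := hmemS ω hω
    obtain ⟨N, hN⟩ := Metric.tendsto_atTop.mp (hξtend ω hω) (1/2) (by norm_num)
    refine ⟨N + 1, fun n hn => ?_⟩
    obtain ⟨m, rfl⟩ : ∃ m, n = m + 1 := ⟨n - 1, by omega⟩
    have hd := hN m (by omega)
    obtain ⟨j, hj⟩ := hξval (m+1) (by omega) ω
    by_contra hne
    have hji : j ≠ i := by
      intro h
      exact hne (by rw [hj, h, ← hi])
    have h1 : (1:ℝ) ≤ dist (ξ (m+1) ω) (ψinf ω) := by
      have hle := dist_le_pi_dist (ξ (m+1) ω) (ψinf ω) i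
      have : dist (ξ (m+1) ω i) (ψinf ω i) = 1 := by
        rw [hj, hi, Pi.single_eq_of_ne (Ne.symm hji), Pi.single_eq_same]
        norm_num [Real.dist_eq]
      linarith
    linarith
  -- norm bound for ψinf
  have hinfnorm : ∀ᵐ ω ∂μ, ‖ψinf ω‖ ≤ 1 := by
    filter_upwards [hbasis] with ω hω
    obtain ⟨i, hi⟩ := hω
    rw [hi]
    refine (pi_norm_le_iff_of_nonneg zero_le_one).mpr fun j => ?_
    rw [Real.norm_eq_abs, Pi.single_apply]
    split <;> norm_num
  -- L¹ convergence
  have hL1 : Tendsto (fun n => ∫ ω, ‖ψ n ω - ψinf ω‖ ∂μ) atTop (nhds 0) := by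
    have := tendsto_integral_of_dominated_convergence (F := fun n ω => ‖ψ n ω - ψinf ω‖)
      (f := fun _ => (0:ℝ)) (fun _ => (2:ℝ))
      (fun n => ((((hψmeas n).mono (ℱ.le n) le_rfl).sub hψinfmeas).norm).aestronglyMeasurable)
      (integrable_const 2)
      (fun n => by
        filter_upwards [hinfnorm] with ω h
        rw [norm_norm]
        calc ‖ψ n ω - ψinf ω‖ ≤ ‖ψ n ω‖ + ‖ψinf ω‖ := norm_sub_le _ _
          _ ≤ 2 := by linarith [hψnorm n ω])
      (by
        filter_upwards [htend] with ω hω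
        have h0 : Tendsto (fun n => ψ n ω - ψinf ω) atTop (nhds 0) := by
          simpa using hω.sub (tendsto_const_nhds (x := ψinf ω))
        simpa using h0.norm)
    simpa using this
  refine ⟨ψinf, hψinfmeas, htend, hL1, hbasis, hev, ?_⟩
  -- the law of ψinf
  intro i
  have hAmeas : MeasurableSet {ω | ψinf ω = Pi.single i 1} :=
    hψinfmeas (measurableSet_singleton (Pi.single i 1))
  have hind : (fun ω => ψinf ω i)
      =ᵐ[μ] Set.indicator {ω | ψinf ω = Pi.single i 1} (fun _ => (1:ℝ)) := by
    filter_upwards [hbasis] with ω hω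
    obtain ⟨j, hj⟩ := hω
    rw [Set.indicator_apply]
    split_ifs with hmem
    · rw [show ψinf ω = Pi.single i 1 from hmem, Pi.single_eq_same]
    · have h : ψinf ω ≠ Pi.single i 1 := hmem
      rw [hj]
      have hji : j ≠ i := by
        intro e
        exact h (by rw [hj, e])
      exact Pi.single_eq_of_ne (Ne.symm hji) 1
  have hint_inf : ∫ ω, ψinf ω i ∂μ = (μ {ω | ψinf ω = Pi.single i 1}).toReal := by
    rw [integral_congr_ae hind, integral_indicator_const _ hAmeas]
    simp
    rfl
  have hconst : ∀ n, ∫ ω, ψ n ω i ∂μ = B₀ i / S0 := by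
    intro n
    have h := (hmart_comp i).2 0 n (Nat.zero_le n)
    calc ∫ ω, ψ n ω i ∂μ
        = ∫ ω, (μ[fun ω => ψ n ω i|ℱ 0]) ω ∂μ := (integral_condExp (ℱ.le 0)).symm
      _ = ∫ ω, ψ 0 ω i ∂μ := integral_congr_ae h
      _ = B₀ i / S0 := by
          have he : (fun ω => ψ 0 ω i) = fun _ => B₀ i / S0 := by
            funext ω
            rw [hψ' 0 ω i, hB0, hs0]
          rw [he, integral_const]
          simp
  have hlim_int : Tendsto (fun n => ∫ ω, ψ n ω i ∂μ) atTop (nhds (∫ ω, ψinf ω i ∂μ)) := by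
    refine tendsto_integral_of_dominated_convergence (fun _ => (1:ℝ))
      (fun n => ((measurable_pi_apply i).comp
        ((hψmeas n).mono (ℱ.le n) le_rfl)).aestronglyMeasurable)
      (integrable_const 1)
      (fun n => ae_of_all _ fun ω => ?_) ?_
    · show ‖ψ n ω i‖ ≤ 1
      rw [Real.norm_eq_abs, abs_le]
      exact ⟨by linarith [hψpos n ω i], hψle1 n ω i⟩
    · filter_upwards [htend] with ω hω
      exact tendsto_pi_nhds.mp hω i
  have hval : ∫ ω, ψinf ω i ∂μ = B₀ i / S0 := by
    have h1 : Tendsto (fun _ : ℕ => B₀ i / S0) atTop (nhds (∫ ω, ψinf ω i ∂μ)) := by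
      have he : (fun n => ∫ ω, ψ n ω i ∂μ) = fun _ : ℕ => B₀ i / S0 := funext hconst
      rwa [he] at hlim_int
    exact (tendsto_nhds_unique tendsto_const_nhds h1).symm
  have hfinal : (μ {ω | ψinf ω = Pi.single i 1}).toReal = B₀ i / S0 := by
    rw [← hint_inf, hval]
  rw [show B₀ i / S0 = (μ {ω | ψinf ω = Pi.single i 1}).toReal from hfinal.symm,
    ENNReal.ofReal_toReal (measure_ne_top μ _)]
end
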